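/- arXiv:2004.02469 — 7 statements merged into one kernel-verified Lean document; each statement's English description precedes it below -/
import Mathlib

section
/- The point p* belongs to the open interval (0,θ), the derivative of the function p ↦ f(p)/g(p) vanishes at p*, and p* is the unique zero of (f/g)' in (0,θ). -/
set_option maxHeartbeats 1000000 in
/-- p* ∈ (0,θ), the derivative of f/g vanishes at p*, and p* is the unique
zero of (f/g)' in (0,θ). -/
theorem stmt_3
    (b1 b2 d1 d2 K sh : ℝ)
    (hb1 : 0 < b1) (hb2 : 0 < b2) (hd1 : 0 < d1) (hd2 : 0 < d2)
    (hK : 0 < K) (hsh0 : 0 < sh) (hsh1 : sh ≤ 1)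
    (hlow : 1 - sh < d1 * b2 / (d2 * b1)) (hhigh : d1 * b2 / (d2 * b1) < 1)
    (f g : ℝ → ℝ)
    (hf : ∀ p, f p = p * (1 - p) * (d1 * b2 - d2 * b1 * (1 - sh * p)) /
      (b1 * (1 - p) * (1 - sh * p) + b2 * p))
    (hg : ∀ p, g p = (1 / K) * (b1 * (1 - p) * (1 - sh * p)) /
      (b1 * (1 - p) * (1 - sh * p) + b2 * p))
    (θ : ℝ) (hθ : θ = (1 / sh) * (1 - d1 * b2 / (d2 * b1)))
    (pstar : ℝ) (hpstar : pstar = (1 / sh) * (1 - Real.sqrt (d1 * b2 / (d2 * b1)))) :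
    pstar ∈ Set.Ioo (0 : ℝ) θ ∧
    deriv (fun x => f x / g x) pstar = 0 ∧
    ∀ x ∈ Set.Ioo (0 : ℝ) θ, deriv (fun y => f y / g y) x = 0 → x = pstar := by
  set r : ℝ := d1 * b2 / (d2 * b1) with hr
  set s : ℝ := Real.sqrt r with hs
  have hd2b1 : (0:ℝ) < d2 * b1 := mul_pos hd2 hb1
  have hr0 : 0 < r := div_pos (mul_pos hd1 hb2) hd2b1
  have hr1 : r < 1 := hhigh
  have hsq : s ^ 2 = r := Real.sq_sqrt hr0.le
  have hs0 : 0 < s := Real.sqrt_pos.mpr hr0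
  have hs1 : s < 1 := by nlinarith
  have hrs : r < s := by nlinarith
  have hrd : d2 * b1 * r = d1 * b2 := by
    rw [hr]; field_simp
  have hθ1 : θ < 1 := by
    rw [hθ, show (1:ℝ)/sh*(1-r) = (1-r)/sh by ring]
    exact (div_lt_one hsh0).mpr (by linarith)
  have hθpos : 0 < θ := by
    rw [hθ]; exact mul_pos (by positivity) (by linarith)
  -- pstar in Ioo 0 θ
  have hmem : pstar ∈ Set.Ioo (0:ℝ) θ := by
    constructor
    · rw [hpstar]; exact mul_pos (by positivity) (by linarith)
    · rw [hpstar, hθ]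
      have : 1 - s < 1 - r := by linarith
      have h1 : (0:ℝ) < 1/sh := by positivity
      nlinarith
  have hθsh : sh * θ = 1 - r := by rw [hθ]; field_simp
  set A : ℝ := K * (d1*b2 - d2*b1) with hA
  set B : ℝ := K * (d2*b1*sh) with hB
  have key : ∀ x ∈ Set.Ioo (0:ℝ) 1, deriv (fun y => f y / g y) x =
      ((A + 2*B*x) * (b1 - b1*sh*x) - (A*x + B*x^2) * (-(b1*sh))) / (b1 - b1*sh*x)^2 := by
    intro x hx
    obtain ⟨hx0, hx1⟩ := hx
    have hev : (fun y => f y / g y) =ᶠ[nhds x] (fun y => (A*y + B*y^2) / (b1 - b1*sh*y)) := by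
      filter_upwards [isOpen_Ioo.mem_nhds (show x ∈ Set.Ioo (0:ℝ) 1 from ⟨hx0, hx1⟩)] with y hy
      obtain ⟨hy0, hy1⟩ := hy
      have h1p : 0 < 1 - y := by linarith
      have h1s : 0 < 1 - sh*y := by nlinarith
      have hD : 0 < b1 * (1 - y) * (1 - sh * y) + b2 * y := by
        nlinarith [mul_pos (mul_pos hb1 h1p) h1s, mul_pos hb2 hy0]
      have hM : (0:ℝ) < b1 - b1*sh*y := by nlinarith [mul_pos hb1 h1s]
      have hgy : g y ≠ 0 := by
        rw [hg]
        exact ne_of_gt (div_pos (mul_pos (by positivity) (mul_pos (mul_pos hb1 h1p) h1s)) hD)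
      rw [div_eq_div_iff hgy hM.ne', hf, hg, hA, hB]
      field_simp
      ring
    rw [hev.deriv_eq]
    have hM : (0:ℝ) < b1 - b1*sh*x := by
      nlinarith [mul_pos hb1 (show (0:ℝ) < 1 - sh*x by nlinarith)]
    have hnum : HasDerivAt (fun y:ℝ => A*y + B*y^2) (A + 2*B*x) x := by
      have h1 := (hasDerivAt_id x).const_mul A
      have h2 := (hasDerivAt_pow 2 x).const_mul B
      have h3 := h1.add h2
      refine h3.congr_deriv ?_
      norm_num
      ring
    have hden : HasDerivAt (fun y:ℝ => b1 - b1*sh*y) (-(b1*sh)) x := by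
      have h1 := ((hasDerivAt_id x).const_mul (b1*sh)).const_sub b1
      refine h1.congr_deriv ?_
      ring
    exact (hnum.div hden hM.ne').deriv
  have hpmem1 : pstar ∈ Set.Ioo (0:ℝ) 1 := ⟨hmem.1, lt_trans hmem.2 hθ1⟩
  have hshp : sh * pstar = 1 - s := by rw [hpstar]; field_simp
  refine ⟨hmem, ?_, ?_⟩
  · rw [key pstar hpmem1, div_eq_zero_iff]
    left
    rw [hA, hB]
    linear_combination (b1*K*d2*b1*(s+1-sh*pstar)) * hshp - (b1*K*d2*b1) * hsq - (b1*K) * hrd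
  · intro x hx hdx
    have hx1 : x ∈ Set.Ioo (0:ℝ) 1 := ⟨hx.1, lt_trans hx.2 hθ1⟩
    have hux : sh * x < 1 - r := by
      have h1 := hx.2
      nlinarith [hθsh]
    have hMx : (0:ℝ) < b1 - b1*sh*x := by
      nlinarith [mul_pos hb1 (show (0:ℝ) < 1 - sh*x by nlinarith)]
    rw [key x hx1, div_eq_zero_iff] at hdx
    rcases hdx with h0 | h0
    · rw [hA, hB] at h0
      have h6 : (1 - sh*x - s) * (b1*K*d2*b1*(1 - sh*x + s)) = 0 := by
        linear_combination -h0 - (b1*K*d2*b1)*hsq - (b1*K)*hrd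
      have h5 : 1 - sh*x = s := by
        rcases mul_eq_zero.mp h6 with h|h
        · linarith
        · exfalso
          have hp1 : 0 < 1 - sh*x + s := by nlinarith
          have : 0 < b1*K*d2*b1*(1 - sh*x + s) := by positivity
          linarith
      rw [hpstar]
      field_simp
      linarith
    · exfalso
      exact (pow_ne_zero 2 hMx.ne') h0
end

section
/- The function p ↦ -f(p)/g(p) is strictly increasing on (0,p*) and strictly decreasing on (p*,θ); consequently its maximum over [0,θ] is attained at p*, i.e. m* = -f(p*)/g(p*), and m* > 0. -/
set_option maxHeartbeats 1600000 in
/-- p ↦ -f(p)/g(p) is strictly increasing on (0,p*) and strictly decreasing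
on (p*,θ); its maximum m* over [0,θ] is attained at p*, i.e. m* = -f(p*)/g(p*), and m* > 0. -/
theorem stmt_4
    (b1 b2 d1 d2 K sh : ℝ)
    (hb1 : 0 < b1) (hb2 : 0 < b2) (hd1 : 0 < d1) (hd2 : 0 < d2)
    (hK : 0 < K) (hsh0 : 0 < sh) (hsh1 : sh ≤ 1)
    (hlow : 1 - sh < d1 * b2 / (d2 * b1)) (hhigh : d1 * b2 / (d2 * b1) < 1)
    (f g : ℝ → ℝ)
    (hf : ∀ p, f p = p * (1 - p) * (d1 * b2 - d2 * b1 * (1 - sh * p)) /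
      (b1 * (1 - p) * (1 - sh * p) + b2 * p))
    (hg : ∀ p, g p = (1 / K) * (b1 * (1 - p) * (1 - sh * p)) /
      (b1 * (1 - p) * (1 - sh * p) + b2 * p))
    (θ : ℝ) (hθ : θ = (1 / sh) * (1 - d1 * b2 / (d2 * b1)))
    (pstar : ℝ) (hpstar : pstar = (1 / sh) * (1 - Real.sqrt (d1 * b2 / (d2 * b1))))
    (mstar : ℝ)
    (hmstar : IsGreatest ((fun p => -f p / g p) '' Set.Icc 0 θ) mstar) :
    StrictMonoOn (fun p => -f p / g p) (Set.Ioo 0 pstar) ∧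
    StrictAntiOn (fun p => -f p / g p) (Set.Ioo pstar θ) ∧
    mstar = -f pstar / g pstar ∧ 0 < mstar := by
  have hB : 0 < d2 * b1 := mul_pos hd2 hb1
  have hAp : 0 < d1 * b2 := mul_pos hd1 hb2
  have hr0 : 0 < d1 * b2 / (d2 * b1) := div_pos hAp hB
  set r : ℝ := d1 * b2 / (d2 * b1) with hr
  set s : ℝ := Real.sqrt r with hsdef
  have hs0 : 0 < s := Real.sqrt_pos.mpr hr0
  have hss : s * s = r := Real.mul_self_sqrt hr0.le
  have hs1 : s < 1 := by nlinarith
  have hrs : r < s := by nlinarith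
  have hA' : d1 * b2 = d2 * b1 * (s * s) := by
    rw [hss, hr]; field_simp
  have hshθ : sh * θ = 1 - r := by rw [hθ]; field_simp
  have hshps : sh * pstar = 1 - s := by rw [hpstar]; field_simp
  have hθ0 : 0 < θ := by
    rw [hθ]; exact mul_pos (by positivity) (by linarith)
  have hθ1 : θ < 1 := by
    rw [hθ, one_div, inv_mul_eq_div, div_lt_one hsh0]; linarith
  have hps0 : 0 < pstar := by
    rw [hpstar]; exact mul_pos (by positivity) (by linarith)
  have hpsθ : pstar < θ := by
    rw [hpstar, hθ]; exact mul_lt_mul_of_pos_left (by linarith) (by positivity)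
  have hc : 0 < K * d2 / sh := by positivity
  -- the value of -f p / g p on [0, θ]
  have hval : ∀ p ∈ Set.Icc (0:ℝ) θ, -f p / g p =
      K * d2 / sh * (((1 - sh*p) - s*s) * (1 - (1 - sh*p)) / (1 - sh*p)) := by
    intro p hp
    obtain ⟨hp0, hpθ⟩ := hp
    have h1 : sh * p ≤ 1 - r := by
      rw [← hshθ]; exact mul_le_mul_of_nonneg_left hpθ hsh0.le
    have hq0 : 0 < 1 - sh * p := by linarith
    have hp1 : p < 1 := lt_of_le_of_lt hpθ hθ1
    have h2 : 0 < b1 * (1 - p) * (1 - sh*p) := mul_pos (mul_pos hb1 (by linarith)) hq0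
    have h3 : 0 ≤ b2 * p := mul_nonneg hb2.le hp0
    have hD : 0 < b1 * (1 - p) * (1 - sh*p) + b2 * p := by linarith
    rw [hf, hg, hA']
    have hK' := hK.ne'
    have hD' := hD.ne'
    have hq0' := hq0.ne'
    have hsh' := hsh0.ne'
    have hp1' : 1 - p ≠ 0 := by linarith
    have hb1' := hb1.ne'
    rw [← neg_div, div_div_div_cancel_right₀ hD', mul_div_assoc', div_eq_div_iff (by simp [*]) (by simp [*])]
    field_simp
    ring
  refine ⟨?_, ?_, ?_⟩
  · -- strictly increasing on (0, pstar)
    intro x hx y hy hxy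
    have hxI : x ∈ Set.Icc (0:ℝ) θ := ⟨hx.1.le, hx.2.le.trans hpsθ.le⟩
    have hyI : y ∈ Set.Icc (0:ℝ) θ := ⟨hy.1.le, hy.2.le.trans hpsθ.le⟩
    show -f x / g x < -f y / g y
    rw [hval x hxI, hval y hyI]
    have hqy : s < 1 - sh * y := by
      have : sh * y < sh * pstar := mul_lt_mul_of_pos_left hy.2 hsh0
      rw [hshps] at this; linarith
    have hqxy : 1 - sh * y < 1 - sh * x := by
      have : sh * x < sh * y := mul_lt_mul_of_pos_left hxy hsh0
      linarith
    have hqx : s < 1 - sh * x := lt_trans hqy hqxy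
    have hqy0 : 0 < 1 - sh * y := lt_trans hs0 hqy
    have hqx0 : 0 < 1 - sh * x := lt_trans hs0 hqx
    apply mul_lt_mul_of_pos_left _ hc
    rw [div_lt_div_iff₀ hqx0 hqy0]
    nlinarith [mul_pos (sub_pos.mpr hqxy)
      (show 0 < (1 - sh*x) * (1 - sh*y) - s*s by nlinarith)]
  · -- strictly decreasing on (pstar, θ)
    intro x hx y hy hxy
    have hxI : x ∈ Set.Icc (0:ℝ) θ := ⟨(hps0.trans hx.1).le, hx.2.le⟩
    have hyI : y ∈ Set.Icc (0:ℝ) θ := ⟨(hps0.trans hy.1).le, hy.2.le⟩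
    show -f y / g y < -f x / g x
    rw [hval x hxI, hval y hyI]
    have hqx : 1 - sh * x < s := by
      have : sh * pstar < sh * x := mul_lt_mul_of_pos_left hx.1 hsh0
      rw [hshps] at this; linarith
    have hqy0 : r < 1 - sh * y := by
      have : sh * y < sh * θ := mul_lt_mul_of_pos_left hy.2 hsh0
      rw [hshθ] at this; linarith
    have hqxy : 1 - sh * y < 1 - sh * x := by
      have : sh * x < sh * y := mul_lt_mul_of_pos_left hxy hsh0
      linarith
    have hqy : 1 - sh * y < s := lt_trans hqxy hqx
    have hqy0' : 0 < 1 - sh * y := lt_trans hr0 hqy0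
    have hqx0' : 0 < 1 - sh * x := lt_trans hqy0' hqxy
    apply mul_lt_mul_of_pos_left _ hc
    rw [div_lt_div_iff₀ hqy0' hqx0']
    have hprod : 0 < s*s - (1 - sh*x) * (1 - sh*y) := by
      nlinarith [mul_pos hs0 (sub_pos.mpr hqy), mul_pos hqy0' (sub_pos.mpr hqx)]
    nlinarith [mul_pos (sub_pos.mpr hqxy) hprod]
  · -- maximum
    have hub : ∀ p ∈ Set.Icc (0:ℝ) θ, -f p / g p ≤ K * d2 / sh * ((s - s*s) * (1 - s) / s) := by
      intro p hp
      rw [hval p hp]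
      apply mul_le_mul_of_nonneg_left _ hc.le
      have h1 : sh * p ≤ 1 - r := by
        rw [← hshθ]; exact mul_le_mul_of_nonneg_left hp.2 hsh0.le
      have hq0 : 0 < 1 - sh * p := by linarith
      rw [div_le_div_iff₀ hq0 hs0]
      nlinarith [mul_nonneg hs0.le (sq_nonneg ((1 - sh*p) - s))]
    have hpsI : pstar ∈ Set.Icc (0:ℝ) θ := ⟨hps0.le, hpsθ.le⟩
    have hq : 1 - sh * pstar = s := by rw [hshps]; ring
    have hvps : -f pstar / g pstar = K * d2 / sh * ((s - s*s) * (1 - s) / s) := by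
      rw [hval pstar hpsI, hq]
    have h2 : -f pstar / g pstar ≤ mstar := hmstar.2 ⟨pstar, hpsI, rfl⟩
    have h1 : mstar ≤ -f pstar / g pstar := by
      obtain ⟨p0, hp0I, hp0e⟩ := hmstar.1
      rw [hvps, ← hp0e]
      exact hub p0 hp0I
    have heq : mstar = -f pstar / g pstar := le_antisymm h1 h2
    refine ⟨heq, ?_⟩
    rw [heq, hvps]
    apply mul_pos hc
    apply div_pos _ hs0
    nlinarith
end

section
/- If M > m*, then the integral T* = ∫₀^θ dν/(f(ν) + M·g(ν)) is finite and strictly positive. -/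
/-- if M > m*, the integral T* = ∫₀^θ dν/(f(ν)+M g(ν)) is finite
(the integrand is interval integrable) and strictly positive. -/
theorem stmt_6
    (b1 b2 d1 d2 K sh : ℝ)
    (hb1 : 0 < b1) (hb2 : 0 < b2) (hd1 : 0 < d1) (hd2 : 0 < d2)
    (hK : 0 < K) (hsh0 : 0 < sh) (hsh1 : sh ≤ 1)
    (hlow : 1 - sh < d1 * b2 / (d2 * b1)) (hhigh : d1 * b2 / (d2 * b1) < 1)
    (f g : ℝ → ℝ)
    (hf : ∀ p, f p = p * (1 - p) * (d1 * b2 - d2 * b1 * (1 - sh * p)) /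
      (b1 * (1 - p) * (1 - sh * p) + b2 * p))
    (hg : ∀ p, g p = (1 / K) * (b1 * (1 - p) * (1 - sh * p)) /
      (b1 * (1 - p) * (1 - sh * p) + b2 * p))
    (θ : ℝ) (hθ : θ = (1 / sh) * (1 - d1 * b2 / (d2 * b1)))
    (mstar : ℝ)
    (hmstar : IsGreatest ((fun p => -f p / g p) '' Set.Icc 0 θ) mstar)
    (M : ℝ) (hM : mstar < M) :
    IntervalIntegrable (fun ν => (f ν + M * g ν)⁻¹) MeasureTheory.volume 0 θ ∧
    0 < ∫ ν in (0:ℝ)..θ, (f ν + M * g ν)⁻¹ := by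
  set r : ℝ := d1 * b2 / (d2 * b1) with hr
  have hr0 : 0 < r := by positivity
  have hθ0 : 0 < θ := by
    rw [hθ]; have : 0 < 1 - r := by linarith
    positivity
  have hshθ : sh * θ = 1 - r := by
    rw [hθ]; field_simp
  have hθ1 : θ < 1 := by
    have : sh * θ < sh * 1 := by rw [hshθ, mul_one]; linarith
    exact lt_of_mul_lt_mul_left this hsh0.le
  -- basic facts on [0, θ]
  have hD : ∀ p ∈ Set.Icc (0:ℝ) θ, 0 < b1 * (1 - p) * (1 - sh * p) + b2 * p := by
    intro p hp
    have h1 : 0 < 1 - p := by linarith [hp.2]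
    have h2 : 0 < 1 - sh * p := by
      have : sh * p ≤ sh * θ := by
        exact mul_le_mul_of_nonneg_left hp.2 hsh0.le
      rw [hshθ] at this; linarith
    have h3 : 0 ≤ b2 * p := mul_nonneg hb2.le hp.1
    have h4 : 0 < b1 * (1 - p) * (1 - sh * p) := by positivity
    linarith
  have hgpos : ∀ p ∈ Set.Icc (0:ℝ) θ, 0 < g p := by
    intro p hp
    have h1 : 0 < 1 - p := by linarith [hp.2]
    have h2 : 0 < 1 - sh * p := by
      have : sh * p ≤ sh * θ := mul_le_mul_of_nonneg_left hp.2 hsh0.le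
      rw [hshθ] at this; linarith
    rw [hg p]
    exact div_pos (by positivity) (hD p hp)
  have hpos : ∀ p ∈ Set.Icc (0:ℝ) θ, 0 < f p + M * g p := by
    intro p hp
    have hle : -f p / g p ≤ mstar := hmstar.2 ⟨p, hp, rfl⟩
    have hglt : -f p / g p < M := lt_of_le_of_lt hle hM
    have := (div_lt_iff₀ (hgpos p hp)).mp hglt
    linarith
  -- continuity of f + M * g on [0, θ]
  have hcont : ContinuousOn (fun ν => f ν + M * g ν) (Set.Icc 0 θ) := by
    have heq : ∀ ν ∈ Set.Icc (0:ℝ) θ, f ν + M * g ν =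
        (ν * (1 - ν) * (d1 * b2 - d2 * b1 * (1 - sh * ν)) +
          M * ((1 / K) * (b1 * (1 - ν) * (1 - sh * ν)))) /
        (b1 * (1 - ν) * (1 - sh * ν) + b2 * ν) := by
      intro ν hν
      have hDν : b1 * (1 - ν) * (1 - sh * ν) + b2 * ν ≠ 0 := (hD ν hν).ne'
      rw [hf ν, hg ν]
      field_simp
    refine ContinuousOn.congr ?_ (fun ν hν => heq ν hν)
    apply ContinuousOn.div
    · fun_prop
    · fun_prop
    · exact fun ν hν => (hD ν hν).ne'
  have hcontinv : ContinuousOn (fun ν => (f ν + M * g ν)⁻¹) (Set.Icc 0 θ) :=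
    hcont.inv₀ (fun ν hν => (hpos ν hν).ne')
  have hII : IntervalIntegrable (fun ν => (f ν + M * g ν)⁻¹)
      MeasureTheory.volume 0 θ := by
    apply ContinuousOn.intervalIntegrable
    rwa [Set.uIcc_of_le hθ0.le]
  refine ⟨hII, ?_⟩
  apply intervalIntegral.intervalIntegral_pos_of_pos_on hII _ hθ0
  intro x hx
  exact inv_pos.mpr (hpos x ⟨hx.1.le, hx.2.le⟩)
end

section
/- For any constant ū > m*, the solution p of the ODE p'(t) = f(p(t)) + ū·g(p(t)) with p(0) = 0 is strictly increasing as long as p(t) ≤ θ, and it reaches the value θ exactly at time T_ū = ∫₀^θ dν/(f(ν) + ū·g(ν)), i.e. p(T_ū) = θ. -/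
open Set Filter Topology

/-- If `p` has derivative `d` at `v`, `p v = y`, and `p < y` just to the right of `v`,
then `d ≤ 0`. -/
lemma aux_upcross {p : ℝ → ℝ} {d v t y : ℝ}
    (hv : HasDerivAt p d v) (hpv : p v = y) (hvt : v < t)
    (hlt : ∀ w ∈ Set.Ioc v t, p w < y) : d ≤ 0 := by
  have hT : Tendsto (slope p v) (𝓝[>] v) (𝓝 d) :=
    (hasDerivAt_iff_tendsto_slope.1 hv).mono_left
      (nhdsWithin_mono v (fun x hx => ne_of_gt hx))
  refine le_of_tendsto hT ?_
  filter_upwards [Ioo_mem_nhdsGT hvt] with w hw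
  have h1 : p w - p v < 0 := by
    have := hlt w ⟨hw.1, hw.2.le⟩
    rw [hpv]; linarith
  have h2 : 0 < w - v := sub_pos.2 hw.1
  rw [slope_def_field]
  exact le_of_lt (div_neg_of_neg_of_pos h1 h2)

/-- If `p` has derivative `d` at `v`, `p v = y`, and `p > y` just to the left of `v`,
then `d ≤ 0`. -/
lemma aux_downcross {p : ℝ → ℝ} {d v s y : ℝ}
    (hv : HasDerivAt p d v) (hpv : p v = y) (hsv : s < v)
    (hgt : ∀ w ∈ Set.Ico s v, y < p w) : d ≤ 0 := by
  have hT : Tendsto (slope p v) (𝓝[<] v) (𝓝 d) :=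
    (hasDerivAt_iff_tendsto_slope.1 hv).mono_left
      (nhdsWithin_mono v (fun x hx => ne_of_lt hx))
  refine le_of_tendsto hT ?_
  filter_upwards [Ioo_mem_nhdsLT hsv] with w hw
  have h1 : 0 < p w - p v := by
    have := hgt w ⟨hw.1.le, hw.2⟩
    rw [hpv]; linarith
  have h2 : w - v < 0 := sub_neg.2 hw.2
  rw [slope_def_field]
  exact le_of_lt (div_neg_of_pos_of_neg h1 h2)

set_option maxHeartbeats 2000000 in
/-- for a constant control ū > m*, the solution of p' = f(p) + ū g(p), p(0)=0,
is strictly increasing as long as p(t) ≤ θ and reaches θ exactly at time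
T_ū = ∫₀^θ dν/(f(ν)+ū g(ν)). -/
theorem stmt_7
    (b1 b2 d1 d2 K sh : ℝ)
    (hb1 : 0 < b1) (hb2 : 0 < b2) (hd1 : 0 < d1) (hd2 : 0 < d2)
    (hK : 0 < K) (hsh0 : 0 < sh) (hsh1 : sh ≤ 1)
    (hlow : 1 - sh < d1 * b2 / (d2 * b1)) (hhigh : d1 * b2 / (d2 * b1) < 1)
    (f g : ℝ → ℝ)
    (hf : ∀ p, f p = p * (1 - p) * (d1 * b2 - d2 * b1 * (1 - sh * p)) /
      (b1 * (1 - p) * (1 - sh * p) + b2 * p))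
    (hg : ∀ p, g p = (1 / K) * (b1 * (1 - p) * (1 - sh * p)) /
      (b1 * (1 - p) * (1 - sh * p) + b2 * p))
    (θ : ℝ) (hθ : θ = (1 / sh) * (1 - d1 * b2 / (d2 * b1)))
    (mstar : ℝ)
    (hmstar : IsGreatest ((fun p => -f p / g p) '' Set.Icc 0 θ) mstar)
    (ubar : ℝ) (hubar : mstar < ubar)
    (Tubar : ℝ) (hTubar : Tubar = ∫ ν in (0:ℝ)..θ, (f ν + ubar * g ν)⁻¹)
    (p : ℝ → ℝ) (hp0 : p 0 = 0)
    (hode : ∀ t : ℝ, 0 ≤ t → HasDerivAt p (f (p t) + ubar * g (p t)) t) :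
    (∀ s t : ℝ, 0 ≤ s → s < t → p t ≤ θ → p s < p t) ∧ p Tubar = θ := by
  have hd2b1 : 0 < d2 * b1 := by positivity
  have hr0 : 0 < d1 * b2 / (d2 * b1) := by positivity
  have hθval : sh * θ = 1 - d1 * b2 / (d2 * b1) := by
    rw [hθ]; field_simp
  have hθpos : 0 < θ := by nlinarith [hθval]
  have hθ1 : θ < 1 := by nlinarith [hθval]
  set y : ℝ := (θ + 1) / 2 with hydef
  have hθy : θ < y := by rw [hydef]; linarith
  have hy1 : y < 1 := by rw [hydef]; linarith
  have hy0 : 0 < y := by rw [hydef]; linarith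
  set z : ℝ := -(b1 / (2 * b2)) with hzdef
  have hz0 : z < 0 := by
    rw [hzdef]; have : 0 < b1 / (2 * b2) := by positivity
    linarith
  have hzy : z < y := hz0.trans hy0
  clear_value y z
  -- the sign factor
  have hrmul : d1 * b2 / (d2 * b1) * (d2 * b1) = d1 * b2 := div_mul_cancel₀ _ hd2b1.ne'
  have hfact : ∀ x : ℝ, d1 * b2 - d2 * b1 * (1 - sh * x) = d2 * b1 * sh * (x - θ) := by
    intro x
    have h1 : d2 * b1 * (sh * θ) = d2 * b1 * (1 - d1 * b2 / (d2 * b1)) := by rw [hθval]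
    nlinarith [h1, hrmul]
  -- positivity of 1 - x and 1 - sh x on [z, y]
  have h1x : ∀ x : ℝ, x ≤ y → 0 < 1 - x := fun x hx => by linarith
  have hshx : ∀ x : ℝ, x ≤ y → 0 < 1 - sh * x := by
    intro x hx
    rcases le_or_gt 0 x with h | h
    · nlinarith
    · nlinarith
  -- positivity of the denominator on [z, y]
  have hDpos : ∀ x : ℝ, z ≤ x → x ≤ y → 0 < b1 * (1 - x) * (1 - sh * x) + b2 * x := by
    intro x h1 h2
    rcases le_or_gt 0 x with h | h
    · have e1 := h1x x h2
      have e2 := hshx x h2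
      have e3 : 0 < b1 * (1 - x) * (1 - sh * x) := by positivity
      have e4 : 0 ≤ b2 * x := mul_nonneg hb2.le h
      linarith
    · have e1 : 1 ≤ 1 - x := by linarith
      have e2 : 1 ≤ 1 - sh * x := by nlinarith
      have e12 : (1:ℝ) * 1 ≤ (1 - x) * (1 - sh * x) :=
        mul_le_mul e1 e2 (by linarith) (by linarith)
      have e3 : b1 ≤ b1 * (1 - x) * (1 - sh * x) := by
        nlinarith [mul_le_mul_of_nonneg_left e12 hb1.le]
      have e4 : -(b1 / 2) ≤ b2 * x := by
        have h5 : -(b1 / (2 * b2)) ≤ x := by rw [hzdef] at h1; exact h1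
        have h6 := mul_le_mul_of_nonneg_left h5 hb2.le
        have h7 : b2 * (-(b1 / (2 * b2))) = -(b1 / 2) := by field_simp
        linarith
      linarith
  -- positivity of g on [z, y]
  have hgpos : ∀ x : ℝ, z ≤ x → x ≤ y → 0 < g x := by
    intro x h1 h2
    rw [hg x]
    exact div_pos (by have := h1x x h2; have := hshx x h2; positivity) (hDpos x h1 h2)
  -- f θ = 0 and mstar ≥ 0, hence ubar > 0
  have hfθ : f θ = 0 := by
    rw [hf θ, hfact θ]
    simp
  have hm0 : (0 : ℝ) ≤ mstar := by
    have h := hmstar.2 ⟨θ, ⟨hθpos.le, le_refl θ⟩, rfl⟩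
    simp only [hfθ, neg_zero, zero_div] at h
    exact h
  have hu0 : 0 < ubar := lt_of_le_of_lt hm0 hubar
  -- positivity of F = f + ubar g on [z, y]
  have hFpos : ∀ x : ℝ, z ≤ x → x ≤ y → 0 < f x + ubar * g x := by
    intro x h1 h2
    have hgx := hgpos x h1 h2
    rcases lt_or_ge x 0 with h0 | h0
    · -- x < 0 : f x > 0
      have hfx : 0 < f x := by
        rw [hf x, hfact x]
        apply div_pos ?_ (hDpos x h1 h2)
        have e1 : 0 < 1 - x := h1x x h2
        have e2 : x - θ < 0 := by linarith
        have e3 : 0 < d2 * b1 * sh := by positivity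
        have e4 : 0 < x * (d2 * b1 * sh * (x - θ)) :=
          mul_pos_of_neg_of_neg h0 (mul_neg_of_pos_of_neg e3 e2)
        nlinarith [mul_pos e1 e4]
      nlinarith
    · rcases le_or_gt x θ with hxθ | hxθ
      · -- 0 ≤ x ≤ θ : use mstar
        have hub : -f x / g x < ubar :=
          lt_of_le_of_lt (hmstar.2 ⟨x, ⟨h0, hxθ⟩, rfl⟩) hubar
        have := (div_lt_iff₀ hgx).1 hub
        linarith
      · -- θ < x ≤ y : f x ≥ 0
        have hfx : 0 ≤ f x := by
          rw [hf x, hfact x]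
          apply div_nonneg ?_ (hDpos x h1 h2).le
          have e1 : 0 < 1 - x := h1x x h2
          have e2 : 0 < x - θ := by linarith
          have e3 : 0 < d2 * b1 * sh := by positivity
          have e5 : 0 < x := hθpos.trans hxθ
          nlinarith [mul_pos (mul_pos e5 e1) (mul_pos e3 e2)]
        nlinarith
  -- continuity of f + ubar g on [z, y]
  have hfeq : f = fun x => x * (1 - x) * (d1 * b2 - d2 * b1 * (1 - sh * x)) /
      (b1 * (1 - x) * (1 - sh * x) + b2 * x) := funext hf
  have hgeq : g = fun x => (1 / K) * (b1 * (1 - x) * (1 - sh * x)) /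
      (b1 * (1 - x) * (1 - sh * x) + b2 * x) := funext hg
  have hFcont : ContinuousOn (fun x => f x + ubar * g x) (Icc z y) := by
    rw [hfeq, hgeq]
    apply ContinuousOn.add
    · exact ContinuousOn.div (by fun_prop) (by fun_prop)
        (fun x hx => (hDpos x hx.1 hx.2).ne')
    · exact ContinuousOn.mul continuousOn_const
        (ContinuousOn.div (by fun_prop) (by fun_prop)
          (fun x hx => (hDpos x hx.1 hx.2).ne'))
  -- clamp to [z, y] and the extended reciprocal G
  set π : ℝ → ℝ := fun x => max z (min x y) with hπdef
  have hπmem : ∀ x, π x ∈ Icc z y := fun x =>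
    ⟨le_max_left _ _, max_le hzy.le (min_le_right x y)⟩
  have hπid : ∀ x, z ≤ x → x ≤ y → π x = x := by
    intro x h1 h2
    rw [hπdef]
    simp only [min_eq_left h2, max_eq_right h1]
  have hπcont : Continuous π := by rw [hπdef]; fun_prop
  set G : ℝ → ℝ := fun x => (f (π x) + ubar * g (π x))⁻¹ with hGdef
  have hGcont : Continuous G := by
    have h1 : Continuous (fun x => f (π x) + ubar * g (π x)) :=
      hFcont.comp_continuous hπcont hπmem
    exact h1.inv₀ (fun x => (hFpos _ (hπmem x).1 (hπmem x).2).ne')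
  set τ : ℝ → ℝ := fun x => ∫ ν in (0:ℝ)..x, G ν with hτdef
  have hτderiv : ∀ x, HasDerivAt τ (G x) x := fun x =>
    (hGcont.integral_hasStrictDerivAt 0 x).hasDerivAt
  have hτcont : Continuous τ := continuous_iff_continuousAt.2
    (fun x => (hτderiv x).continuousAt)
  have hτ0 : τ 0 = 0 := by rw [hτdef]; simp
  -- Tubar = τ θ
  have hTθ : Tubar = τ θ := by
    rw [hTubar, hτdef]
    apply intervalIntegral.integral_congr
    intro ν hν
    rw [Set.uIcc_of_le hθpos.le] at hν
    have h1 : z ≤ ν := hz0.le.trans hν.1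
    have h2 : ν ≤ y := hν.2.trans hθy.le
    simp only [hGdef, hπid ν h1 h2]
  -- continuity of p on [0, ∞)
  have hpc : ContinuousOn p (Ici 0) := fun t ht =>
    ((hode t ht).continuousAt).continuousWithinAt
  -- lower bound: p stays above z
  have hlower : ∀ u : ℝ, 0 ≤ u → z < p u := by
    intro u hu
    by_contra hcon
    push_neg at hcon
    have hcu : ContinuousOn p (Icc 0 u) := hpc.mono (Icc_subset_Ici_self)
    have hSne : ∃ v ∈ Icc 0 u, p v = z := by
      have h := intermediate_value_Icc' hu hcu
      have hz : z ∈ Icc (p u) (p 0) := ⟨hcon, by rw [hp0]; exact hz0.le⟩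
      obtain ⟨v, hv, hpv⟩ := h hz
      exact ⟨v, hv, hpv⟩
    set S := Icc 0 u ∩ p ⁻¹' {z} with hSdef
    have hScl : IsClosed S := hcu.preimage_isClosed_of_isClosed isClosed_Icc isClosed_singleton
    have hScomp : IsCompact S := isCompact_Icc.of_isClosed_subset hScl inter_subset_left
    obtain ⟨v, hvS, hvle⟩ := hScomp.exists_isLeast
      (by obtain ⟨v, hv1, hv2⟩ := hSne; exact ⟨v, hv1, hv2⟩)
    obtain ⟨⟨hv0, hvu⟩, hpv⟩ := hvS
    have hpvz : p v = z := hpv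
    have hvpos : 0 < v := by
      rcases eq_or_lt_of_le hv0 with h | h
      · exfalso; rw [← h, hp0] at hpvz; exact hz0.ne hpvz.symm
      · exact h
    have hgt : ∀ w ∈ Ico 0 v, z < p w := by
      intro w hw
      by_contra hc
      push_neg at hc
      have hcw : ContinuousOn p (Icc 0 w) := hpc.mono (Icc_subset_Ici_self)
      have h := intermediate_value_Icc' hw.1 hcw
      obtain ⟨w', hw', hpw'⟩ := h ⟨hc, by rw [hp0]; exact hz0.le⟩
      have : v ≤ w' := hvle ⟨⟨hw'.1, hw'.2.trans (hw.2.le.trans hvu)⟩, hpw'⟩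
      linarith [hw'.2, hw.2]
    have hder := hode v hv0
    have := aux_downcross hder hpvz hvpos (fun w hw => hgt w hw)
    have hFz : 0 < f z + ubar * g z := hFpos z le_rfl hzy.le
    rw [hpvz] at this
    linarith
  -- upper bound: if p t ≤ θ then p u < y for all u ∈ [0, t]
  have hupper : ∀ t : ℝ, 0 ≤ t → p t ≤ θ → ∀ u : ℝ, 0 ≤ u → u ≤ t → p u < y := by
    intro t ht hpt u hu hut
    by_contra hcon
    push_neg at hcon
    have hct : ContinuousOn p (Icc 0 t) := hpc.mono (Icc_subset_Ici_self)
    have hSne : ∃ v ∈ Icc 0 t, p v = y := by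
      have hcut : ContinuousOn p (Icc u t) := hpc.mono (fun w hw => hu.trans hw.1)
      have h := intermediate_value_Icc' hut hcut
      obtain ⟨v, hv, hpv⟩ := h ⟨hpt.trans hθy.le, hcon⟩
      exact ⟨v, ⟨hu.trans hv.1, hv.2⟩, hpv⟩
    set S := Icc 0 t ∩ p ⁻¹' {y} with hSdef
    have hScl : IsClosed S := hct.preimage_isClosed_of_isClosed isClosed_Icc isClosed_singleton
    have hScomp : IsCompact S := isCompact_Icc.of_isClosed_subset hScl inter_subset_left
    obtain ⟨v, hvS, hvge⟩ := hScomp.exists_isGreatest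
      (by obtain ⟨v, hv1, hv2⟩ := hSne; exact ⟨v, hv1, hv2⟩)
    obtain ⟨⟨hv0, hvt⟩, hpv⟩ := hvS
    have hpvy : p v = y := hpv
    have hvltt : v < t := by
      rcases eq_or_lt_of_le hvt with h | h
      · exfalso; rw [h] at hpvy; rw [hpvy] at hpt; linarith
      · exact h
    have hltw : ∀ w ∈ Ioc v t, p w < y := by
      intro w hw
      by_contra hc
      push_neg at hc
      have hcwt : ContinuousOn p (Icc w t) := hpc.mono (fun w' hw' => (hv0.trans hw.1.le).trans hw'.1)
      have h := intermediate_value_Icc' hw.2 hcwt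
      obtain ⟨w', hw', hpw'⟩ := h ⟨hpt.trans hθy.le, hc⟩
      have : w' ≤ v := hvge ⟨⟨hv0.trans (hw.1.le.trans hw'.1), hw'.2⟩, hpw'⟩
      linarith [hw'.1, hw.1]
    have hder := hode v hv0
    have := aux_upcross hder hpvy hvltt hltw
    have hFy : 0 < f y + ubar * g y := hFpos y hzy.le le_rfl
    rw [hpvy] at this
    linarith
  -- strict monotonicity claim
  have hmono : ∀ t : ℝ, 0 ≤ t → p t ≤ θ → StrictMonoOn p (Icc 0 t) := by
    intro t ht hpt
    apply strictMonoOn_of_deriv_pos (convex_Icc 0 t) (hpc.mono Icc_subset_Ici_self)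
    intro x hx
    rw [interior_Icc] at hx
    have hx0 : 0 ≤ x := hx.1.le
    rw [(hode x hx0).deriv]
    exact hFpos (p x) (hlower x hx0).le (hupper t ht hpt x hx0 hx.2.le).le
  have part1 : ∀ s t : ℝ, 0 ≤ s → s < t → p t ≤ θ → p s < p t := by
    intro s t hs hst hpt
    have ht : 0 ≤ t := hs.trans hst.le
    exact hmono t ht hpt ⟨hs, hst.le⟩ ⟨ht, le_rfl⟩ hst
  -- p eventually exceeds θ
  obtain ⟨x₀, hx₀mem, hx₀min⟩ := isCompact_Icc.exists_isMinOn
    (nonempty_Icc.2 hzy.le) hFcont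
  set c : ℝ := f x₀ + ubar * g x₀ with hcdef
  have hc : 0 < c := hFpos x₀ hx₀mem.1 hx₀mem.2
  have hexceed : ∃ u : ℝ, 0 ≤ u ∧ θ < p u := by
    by_contra hcon
    push_neg at hcon
    set t0 : ℝ := θ / c + 1 with ht0def
    have ht0 : 0 ≤ t0 := by rw [ht0def]; positivity
    have hq : MonotoneOn (fun t => p t - c * t) (Icc 0 t0) := by
      apply monotoneOn_of_deriv_nonneg (convex_Icc 0 t0)
      · exact ((hpc.mono Icc_subset_Ici_self).sub (by fun_prop))
      · intro x hx
        rw [interior_Icc] at hx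
        exact (((hode x hx.1.le).sub ((hasDerivAt_id x).const_mul c)).differentiableAt.differentiableWithinAt)
      · intro x hx
        rw [interior_Icc] at hx
        have hd : HasDerivAt (fun t => p t - c * t) (f (p x) + ubar * g (p x) - c) x := by
          have h2 : HasDerivAt (fun t : ℝ => c * t) c x := by
            simpa using (hasDerivAt_id x).const_mul c
          exact (hode x hx.1.le).sub h2
        rw [hd.deriv]
        have hmem : p x ∈ Icc z y :=
          ⟨(hlower x hx.1.le).le, (hcon x hx.1.le).trans hθy.le⟩
        have h7 := isMinOn_iff.1 hx₀min (p x) hmem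
        rw [hcdef]
        linarith
    have h01 : (0:ℝ) ∈ Icc (0:ℝ) t0 := ⟨le_rfl, ht0⟩
    have h02 : t0 ∈ Icc (0:ℝ) t0 := ⟨ht0, le_rfl⟩
    have := hq h01 h02 ht0
    simp only [hp0, mul_zero, sub_zero] at this
    have hct0 : c * t0 = θ + c := by
      rw [ht0def]; field_simp
    have hpt0 := hcon t0 ht0
    nlinarith
  obtain ⟨u, hu0, hpu⟩ := hexceed
  -- first time p reaches θ
  have hcu : ContinuousOn p (Icc 0 u) := hpc.mono Icc_subset_Ici_self
  have hSne : ∃ v ∈ Icc 0 u, p v = θ := by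
    have h := intermediate_value_Icc hu0 hcu
    obtain ⟨v, hv, hpv⟩ := h ⟨by rw [hp0]; exact hθpos.le, hpu.le⟩
    exact ⟨v, hv, hpv⟩
  set S := Icc 0 u ∩ p ⁻¹' {θ} with hSdef
  have hScl : IsClosed S := hcu.preimage_isClosed_of_isClosed isClosed_Icc isClosed_singleton
  have hScomp : IsCompact S := isCompact_Icc.of_isClosed_subset hScl inter_subset_left
  obtain ⟨v, hvS, hvle⟩ := hScomp.exists_isLeast
    (by obtain ⟨v, hv1, hv2⟩ := hSne; exact ⟨v, hv1, hv2⟩)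
  obtain ⟨⟨hv0, hvu⟩, hpvθ'⟩ := hvS
  have hpvθ : p v = θ := hpvθ'
  -- on [0, v], p stays ≤ θ
  have hvlt : ∀ w : ℝ, 0 ≤ w → w ≤ v → p w ≤ θ := by
    intro w hw hwv
    by_contra hc
    push_neg at hc
    have hcw : ContinuousOn p (Icc 0 w) := hpc.mono Icc_subset_Ici_self
    have h := intermediate_value_Icc hw hcw
    obtain ⟨w', hw', hpw'⟩ := h ⟨by rw [hp0]; exact hθpos.le, hc.le⟩
    have : v ≤ w' := hvle ⟨⟨hw'.1, hw'.2.trans (hwv.trans hvu)⟩, hpw'⟩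
    have h1 : w = w' := le_antisymm (hwv.trans this) hw'.2
    rw [h1, hpw'] at hc
    exact lt_irrefl θ hc
  -- constancy of τ (p t) - t on [0, v]
  have hcontv : ContinuousOn (fun t => τ (p t) - t) (Icc 0 v) := by
    apply ContinuousOn.sub ?_ continuousOn_id
    exact hτcont.comp_continuousOn (hpc.mono Icc_subset_Ici_self)
  have hderv : ∀ x ∈ Ico 0 v, HasDerivWithinAt (fun t => τ (p t) - t) 0 (Ici x) x := by
    intro x hx
    have hx0 := hx.1
    have hdp := hode x hx0
    have h1 : z ≤ p x := (hlower x hx0).le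
    have h2 : p x ≤ y := (hvlt x hx0 hx.2.le).trans hθy.le
    have hchain : HasDerivAt (fun t => τ (p t))
        (G (p x) * (f (p x) + ubar * g (p x))) x :=
      (hτderiv (p x)).comp x hdp
    have hGval : G (p x) = (f (p x) + ubar * g (p x))⁻¹ := by
      simp only [hGdef, hπid _ h1 h2]
    have hone : G (p x) * (f (p x) + ubar * g (p x)) = 1 := by
      rw [hGval]
      exact inv_mul_cancel₀ (hFpos (p x) h1 h2).ne'
    have hd : HasDerivAt (fun t => τ (p t) - t) 0 x := by
      have h3 := hchain.sub (hasDerivAt_id x)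
      rw [hone, sub_self] at h3
      exact h3
    exact hd.hasDerivWithinAt
  have hconst := constant_of_has_deriv_right_zero hcontv hderv v ⟨hv0, le_rfl⟩
  simp only [hpvθ, hp0, hτ0] at hconst
  have hτθv : τ θ = v := by linarith [hconst]
  refine ⟨part1, ?_⟩
  rw [hTθ, hτθv]
  exact hpvθ
end

section
/- Fix T > 0 and M > m*. There exists a constant control ū ∈ (m*, M] such that the solution p of p'(t) = f(p(t)) + ū·g(p(t)) with p(0) = 0 satisfies p(T) ≥ θ if and only if T ≥ T*, where T* = ∫₀^θ dν/(f(ν) + M·g(ν)). -/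
open Set intervalIntegral MeasureTheory

set_option maxHeartbeats 1000000

/-- for fixed T > 0 and M > m*, there exists a constant control ū ∈ (m*,M]
whose solution of p' = f(p) + ū g(p), p(0)=0, satisfies p(T) ≥ θ if and only if T ≥ T*. -/
theorem stmt_9
    (b1 b2 d1 d2 K sh : ℝ)
    (hb1 : 0 < b1) (hb2 : 0 < b2) (hd1 : 0 < d1) (hd2 : 0 < d2)
    (hK : 0 < K) (hsh0 : 0 < sh) (hsh1 : sh ≤ 1)
    (hlow : 1 - sh < d1 * b2 / (d2 * b1)) (hhigh : d1 * b2 / (d2 * b1) < 1)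
    (f g : ℝ → ℝ)
    (hf : ∀ p, f p = p * (1 - p) * (d1 * b2 - d2 * b1 * (1 - sh * p)) /
      (b1 * (1 - p) * (1 - sh * p) + b2 * p))
    (hg : ∀ p, g p = (1 / K) * (b1 * (1 - p) * (1 - sh * p)) /
      (b1 * (1 - p) * (1 - sh * p) + b2 * p))
    (θ : ℝ) (hθ : θ = (1 / sh) * (1 - d1 * b2 / (d2 * b1)))
    (mstar : ℝ)
    (hmstar : IsGreatest ((fun p => -f p / g p) '' Set.Icc 0 θ) mstar)
    (T M : ℝ) (hT : 0 < T) (hM : mstar < M)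
    (Tstar : ℝ) (hTstar : Tstar = ∫ ν in (0:ℝ)..θ, (f ν + M * g ν)⁻¹) :
    (∃ ubar ∈ Set.Ioc mstar M, ∃ p : ℝ → ℝ, p 0 = 0 ∧
        (∀ t ∈ Set.Icc (0:ℝ) T, HasDerivAt p (f (p t) + ubar * g (p t)) t) ∧
        θ ≤ p T) ↔ Tstar ≤ T := by
  have hfE : f = fun p => p * (1 - p) * (d1 * b2 - d2 * b1 * (1 - sh * p)) /
      (b1 * (1 - p) * (1 - sh * p) + b2 * p) := funext hf
  have hgE : g = fun p => (1 / K) * (b1 * (1 - p) * (1 - sh * p)) /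
      (b1 * (1 - p) * (1 - sh * p) + b2 * p) := funext hg
  have hd2b1 : 0 < d2 * b1 := mul_pos hd2 hb1
  have hθpos : 0 < θ := by
    have h1 : 0 < 1 - d1 * b2 / (d2 * b1) := by linarith
    rw [hθ]; positivity
  have hθ1 : θ < 1 := by
    have h2 : 1 - d1 * b2 / (d2 * b1) < sh := by linarith
    rw [hθ]
    calc (1 / sh) * (1 - d1 * b2 / (d2 * b1)) < (1 / sh) * sh := by
          exact mul_lt_mul_of_pos_left h2 (by positivity)
      _ = 1 := by field_simp
  have hshθ : sh * θ = 1 - d1 * b2 / (d2 * b1) := by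
    rw [hθ]; field_simp
  -- denominator positivity
  have hDpos : ∀ x : ℝ, 0 ≤ x → x ≤ 1 → 0 < b1 * (1 - x) * (1 - sh * x) + b2 * x := by
    intro x h0 h1
    rcases h0.eq_or_lt with h|hx
    · rw [← h]; simpa using hb1
    · have hs : 0 ≤ 1 - sh * x := by nlinarith
      have h2 : 0 ≤ b1 * (1 - x) * (1 - sh * x) :=
        mul_nonneg (mul_nonneg hb1.le (by linarith)) hs
      nlinarith [mul_pos hb2 hx]
  have hf0 : f 0 = 0 := by rw [hf]; norm_num
  have hgpos : ∀ x : ℝ, 0 ≤ x → x < 1 → 0 < g x := by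
    intro x h0 h1
    rw [hg]
    have hsx : 0 < 1 - sh * x := by nlinarith
    have h1' : 0 < 1 - x := by linarith
    exact div_pos (by positivity) (hDpos x h0 h1.le)
  have hfpos : ∀ x : ℝ, θ < x → x < 1 → 0 < f x := by
    intro x h0 h1
    rw [hf]
    have hr : d2 * b1 * (d1 * b2 / (d2 * b1)) = d1 * b2 := by field_simp
    have h2 : 0 < d1 * b2 - d2 * b1 * (1 - sh * x) := by nlinarith [mul_lt_mul_of_pos_left h0 hsh0]
    have h3 : 0 < x := lt_trans hθpos h0
    have h1' : 0 < 1 - x := by linarith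
    exact div_pos (by positivity) (hDpos x h3.le h1.le)
  have hmaux : ∀ x ∈ Set.Icc (0:ℝ) θ, -f x / g x ≤ mstar := fun x hx => hmstar.2 ⟨x, hx, rfl⟩
  have hM0 : 0 < M := by
    have h0 := hmaux 0 ⟨le_refl _, hθpos.le⟩
    rw [hf0] at h0
    simp only [neg_zero, zero_div] at h0
    linarith
  have hHposIcc : ∀ x ∈ Set.Icc (0:ℝ) θ, 0 < f x + M * g x := by
    intro x hx
    have hg' := hgpos x hx.1 (lt_of_le_of_lt hx.2 hθ1)
    have h2 : -f x / g x < M := lt_of_le_of_lt (hmaux x hx) hM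
    rw [div_lt_iff₀ hg'] at h2
    linarith
  have hHpos : ∀ x : ℝ, 0 ≤ x → x < 1 → 0 < f x + M * g x := by
    intro x h0 h1
    rcases le_or_gt x θ with h|h
    · exact hHposIcc x ⟨h0, h⟩
    · have := hfpos x h h1
      have := hgpos x h0 h1
      nlinarith
  -- continuity facts
  have hDcont : Continuous (fun x : ℝ => b1 * (1 - x) * (1 - sh * x) + b2 * x) := by fun_prop
  have hHcontAt : ∀ x : ℝ, b1 * (1 - x) * (1 - sh * x) + b2 * x ≠ 0 →
      ContinuousAt (fun t => f t + M * g t) x := by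
    intro x hx
    rw [hfE, hgE]
    exact ((ContinuousAt.div (by fun_prop) hDcont.continuousAt hx).add
      (continuousAt_const.mul (ContinuousAt.div (by fun_prop) hDcont.continuousAt hx)))
  -- a negative left endpoint where everything is still nice
  obtain ⟨ε, hε, hball⟩ : ∃ ε > 0, ∀ y : ℝ, dist y 0 < ε →
      (0 < b1 * (1 - y) * (1 - sh * y) + b2 * y ∧ 0 < f y + M * g y) := by
    have hD0 : (0:ℝ) < b1 * (1 - 0) * (1 - sh * 0) + b2 * 0 := by simpa using hb1
    have hH0 : 0 < f 0 + M * g 0 := hHpos 0 le_rfl one_pos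
    have e1 : ∀ᶠ y in nhds (0:ℝ), 0 < b1 * (1 - y) * (1 - sh * y) + b2 * y :=
      hDcont.continuousAt.eventually (eventually_gt_nhds hD0)
    have e2 : ∀ᶠ y in nhds (0:ℝ), 0 < f y + M * g y :=
      (hHcontAt 0 hD0.ne').eventually (eventually_gt_nhds hH0)
    exact Metric.eventually_nhds_iff.mp (e1.and e2)
  set a : ℝ := -(ε/2) with ha_def
  have ha0 : a < 0 := by simp [ha_def]; positivity
  -- master positivity lemma on [a, 1)
  have hmaster : ∀ x : ℝ, a ≤ x → x < 1 →
      (0 < b1 * (1 - x) * (1 - sh * x) + b2 * x ∧ 0 < f x + M * g x) := by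
    intro x h1 h2
    rcases le_or_gt 0 x with h|h
    · exact ⟨hDpos x h h2.le, hHpos x h h2⟩
    · refine hball x ?_
      rw [Real.dist_eq, sub_zero, abs_of_neg h]
      rw [ha_def] at h1; linarith
  have hInvContAt : ∀ x : ℝ, a ≤ x → x < 1 → ContinuousAt (fun t => (f t + M * g t)⁻¹) x := by
    intro x h1 h2
    exact (hHcontAt x (hmaster x h1 h2).1.ne').inv₀ (hmaster x h1 h2).2.ne'
  -- interval integrability
  have hII : ∀ x y : ℝ, a ≤ min x y → max x y < 1 →
      IntervalIntegrable (fun t => (f t + M * g t)⁻¹) volume x y := by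
    intro x y h1 h2
    apply ContinuousOn.intervalIntegrable
    intro t ht
    have ht' : min x y ≤ t ∧ t ≤ max x y := by
      rcases Set.mem_uIcc.mp ht with ⟨u1, u2⟩ | ⟨u1, u2⟩
      · constructor
        · exact le_trans (min_le_left x y) u1
        · exact le_trans u2 (le_max_right x y)
      · constructor
        · exact le_trans (min_le_right x y) u1
        · exact le_trans u2 (le_max_left x y)
    exact (hInvContAt t (le_trans h1 ht'.1) (lt_of_le_of_lt ht'.2 h2)).continuousWithinAt
  -- the antiderivative
  obtain ⟨Φ, hΦdef⟩ : ∃ Φ : ℝ → ℝ, Φ = fun x => ∫ t in (0:ℝ)..x, (f t + M * g t)⁻¹ := ⟨_, rfl⟩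
  have hmeasInv : Measurable (fun t => (f t + M * g t)⁻¹) := by
    have hmD : Measurable (fun x : ℝ => b1 * (1 - x) * (1 - sh * x) + b2 * x) := by fun_prop
    rw [hfE, hgE]
    exact (((Measurable.div (by fun_prop) hmD).add
      (measurable_const.mul (Measurable.div (by fun_prop) hmD)))).inv
  have hΦd : ∀ x : ℝ, a ≤ x → x < 1 → HasDerivAt Φ ((f x + M * g x)⁻¹) x := by
    intro x h1 h2
    rw [hΦdef]
    refine intervalIntegral.integral_hasDerivAt_right (hII 0 x ?_ ?_) ?_ (hInvContAt x h1 h2)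
    · simp only [le_min_iff]; exact ⟨ha0.le, h1⟩
    · simp only [max_lt_iff]; exact ⟨one_pos, h2⟩
    · exact hmeasInv.stronglyMeasurable.stronglyMeasurableAtFilter
  have hΦadd : ∀ x y : ℝ, a ≤ x → x ≤ y → y < 1 →
      Φ y = Φ x + ∫ t in x..y, (f t + M * g t)⁻¹ := by
    intro x y h1 h2 h3
    rw [hΦdef]
    have i1 : IntervalIntegrable (fun t => (f t + M * g t)⁻¹) volume 0 x := by
      apply hII 0 x
      · simp only [le_min_iff]; exact ⟨ha0.le, h1⟩
      · simp only [max_lt_iff]; exact ⟨one_pos, lt_of_le_of_lt h2 h3⟩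
    have i2 : IntervalIntegrable (fun t => (f t + M * g t)⁻¹) volume x y := by
      apply hII x y
      · simp only [le_min_iff]; exact ⟨h1, le_trans h1 h2⟩
      · simp only [max_lt_iff]; exact ⟨lt_of_le_of_lt h2 h3, h3⟩
    exact (intervalIntegral.integral_add_adjacent_intervals i1 i2).symm
  have hΦlt : ∀ x y : ℝ, a ≤ x → x < y → y < 1 → Φ x < Φ y := by
    intro x y h1 h2 h3
    rw [hΦadd x y h1 h2.le h3]
    have hpos : 0 < ∫ t in x..y, (f t + M * g t)⁻¹ := by
      apply intervalIntegral_pos_of_pos_on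
      · apply hII x y
        · simp only [le_min_iff]; exact ⟨h1, le_trans h1 h2.le⟩
        · simp only [max_lt_iff]; exact ⟨lt_of_le_of_lt h2.le h3, h3⟩
      · intro t ht
        exact inv_pos.mpr (hmaster t (le_trans h1 ht.1.le) (lt_trans ht.2 h3)).2
      · exact h2
    linarith
  have hΦle : ∀ x y : ℝ, a ≤ x → x ≤ y → y < 1 → Φ x ≤ Φ y := by
    intro x y h1 h2 h3
    rcases h2.eq_or_lt with h|h
    · rw [h]
    · exact (hΦlt x y h1 h h3).le
  have hΦ0 : Φ 0 = 0 := by rw [hΦdef]; simp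
  have hTstarΦ : Tstar = Φ θ := by rw [hΦdef, hTstar]
  have hTstar0 : 0 ≤ Tstar := by
    rw [hTstarΦ, ← hΦ0]
    exact hΦle 0 θ ha0.le hθpos.le hθ1
  have forward : (∃ ubar ∈ Set.Ioc mstar M, ∃ p : ℝ → ℝ, p 0 = 0 ∧
      (∀ t ∈ Set.Icc (0:ℝ) T, HasDerivAt p (f (p t) + ubar * g (p t)) t) ∧
      θ ≤ p T) → Tstar ≤ T := by
    rintro ⟨u, ⟨hu1, hu2⟩, p, hp0, hpd, hpT⟩
    have pcont : ∀ t ∈ Set.Icc (0:ℝ) T, ContinuousAt p t := fun t ht => (hpd t ht).continuousAt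
    have pconton : ContinuousOn p (Set.Icc 0 T) := fun t ht => (pcont t ht).continuousWithinAt
    -- first hitting time of θ
    set S : Set ℝ := Set.Icc 0 T ∩ p ⁻¹' (Set.Ici θ) with hS_def
    have hSclosed : IsClosed S := pconton.preimage_isClosed_of_isClosed isClosed_Icc isClosed_Ici
    have hSne : T ∈ S := ⟨⟨hT.le, le_refl T⟩, hpT⟩
    have hSbdd : BddBelow S := ⟨0, fun t ht => ht.1.1⟩
    set τ : ℝ := sInf S with hτ_def
    have hτS : τ ∈ S := hSclosed.csInf_mem ⟨T, hSne⟩ hSbdd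
    have hτ0 : 0 ≤ τ := hτS.1.1
    have hτT : τ ≤ T := hτS.1.2
    have hθpτ : θ ≤ p τ := hτS.2
    have hτpos : 0 < τ := by
      rcases hτ0.eq_or_lt with h|h
      · exfalso; rw [← h, hp0] at hθpτ; linarith
      · exact h
    have hlt : ∀ t : ℝ, 0 ≤ t → t < τ → p t < θ := by
      intro t h0 h1
      by_contra hc
      push_neg at hc
      have : τ ≤ t := csInf_le hSbdd ⟨⟨h0, le_trans h1.le hτT⟩, hc⟩
      linarith
    have hpτ : p τ = θ := by
      refine le_antisymm ?_ hθpτ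
      by_contra hc
      push_neg at hc
      have hev : ∀ᶠ t in nhds τ, θ < p t :=
        (pcont τ ⟨hτ0, hτT⟩).eventually (eventually_gt_nhds hc)
      have hev' : ∀ᶠ t in nhdsWithin τ (Set.Iio τ), θ < p t :=
        hev.filter_mono nhdsWithin_le_nhds
      have hmem : Set.Ioo 0 τ ∈ nhdsWithin τ (Set.Iio τ) :=
        Ioo_mem_nhdsLT_of_mem ⟨hτpos, le_refl τ⟩
      obtain ⟨t, ht1, ht2⟩ := (hev'.and (Filter.eventually_of_mem hmem (fun x hx => hx))).exists
      have : τ ≤ t := csInf_le hSbdd ⟨⟨ht2.1.le, le_trans ht2.2.le hτT⟩, ht1.le⟩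
      linarith [ht2.2]
    -- last time p equals 0 before τ
    set A : Set ℝ := Set.Icc 0 τ ∩ p ⁻¹' (Set.Iic 0) with hA_def
    have hAclosed : IsClosed A :=
      (pconton.mono (Set.Icc_subset_Icc le_rfl hτT)).preimage_isClosed_of_isClosed
        isClosed_Icc isClosed_Iic
    have hAne : (0:ℝ) ∈ A := ⟨⟨le_refl 0, hτ0⟩, by simp [hp0]⟩
    have hAbdd : BddAbove A := ⟨τ, fun t ht => ht.1.2⟩
    set s : ℝ := sSup A with hs_def
    have hsA : s ∈ A := hAclosed.csSup_mem ⟨0, hAne⟩ hAbdd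
    have hs0 : 0 ≤ s := hsA.1.1
    have hsτ : s ≤ τ := hsA.1.2
    have hps : p s ≤ 0 := hsA.2
    have hgt : ∀ t : ℝ, s < t → t ≤ τ → 0 < p t := by
      intro t h1 h2
      by_contra hc
      push_neg at hc
      have : t ≤ s := le_csSup hAbdd ⟨⟨le_trans hs0 h1.le, h2⟩, hc⟩
      linarith
    have hsτ' : s < τ := by
      rcases hsτ.eq_or_lt with h|h
      · exfalso; rw [h, hpτ] at hps; linarith
      · exact h
    have hps0 : p s = 0 := by
      refine le_antisymm hps ?_
      by_contra hc
      push_neg at hc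
      have hev : ∀ᶠ t in nhds s, p t < 0 :=
        (pcont s ⟨hs0, le_trans hsτ hτT⟩).eventually (eventually_lt_nhds hc)
      have hev' : ∀ᶠ t in nhdsWithin s (Set.Ioi s), p t < 0 :=
        hev.filter_mono nhdsWithin_le_nhds
      have hmem : Set.Ioo s τ ∈ nhdsWithin s (Set.Ioi s) :=
        Ioo_mem_nhdsGT_of_mem ⟨le_refl s, hsτ'⟩
      obtain ⟨t, ht1, ht2⟩ := (hev'.and (Filter.eventually_of_mem hmem (fun x hx => hx))).exists
      exact absurd (hgt t ht2.1 ht2.2.le) (by linarith)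
    have hrange : ∀ t ∈ Set.Icc s τ, p t ∈ Set.Icc (0:ℝ) θ := by
      intro t ⟨h1, h2⟩
      constructor
      · rcases h1.eq_or_lt with h|h
        · rw [← h, hps0]
        · exact (hgt t h h2).le
      · rcases h2.eq_or_lt with h|h
        · rw [h, hpτ]
        · exact (hlt t (le_trans hs0 h1) h).le
    -- the comparison function ψ
    set ψ : ℝ → ℝ := fun t => t - Φ (p t) with hψ_def
    have hder : ∀ t ∈ Set.Ioo s τ,
        HasDerivAt ψ (1 - (f (p t) + M * g (p t))⁻¹ * (f (p t) + u * g (p t))) t := by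
      intro t ht
      have htT : t ∈ Set.Icc (0:ℝ) T := ⟨le_trans hs0 ht.1.le, le_trans ht.2.le hτT⟩
      have hpt := hrange t ⟨ht.1.le, ht.2.le⟩
      have h1 := hΦd (p t) (le_trans ha0.le hpt.1) (lt_of_le_of_lt hpt.2 hθ1)
      have h2 := hpd t htT
      have h3 := h1.comp t h2
      have h4 := (hasDerivAt_id t).sub h3
      exact h4
    have hmono : MonotoneOn ψ (Set.Icc s τ) := by
      apply monotoneOn_of_deriv_nonneg (convex_Icc s τ)
      · -- continuity
        have hΦconton : ContinuousOn Φ (Set.Icc 0 θ) := fun x hx =>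
          ((hΦd x (le_trans ha0.le hx.1) (lt_of_le_of_lt hx.2 hθ1)).continuousAt).continuousWithinAt
        have hpcont' : ContinuousOn p (Set.Icc s τ) :=
          pconton.mono (Set.Icc_subset_Icc hs0 hτT)
        exact (continuousOn_id).sub (hΦconton.comp hpcont' hrange)
      · intro t ht
        rw [interior_Icc] at ht
        exact ((hder t ht).differentiableAt).differentiableWithinAt
      · intro t ht
        rw [interior_Icc] at ht
        rw [(hder t ht).deriv]
        have hpt := hrange t ⟨ht.1.le, ht.2.le⟩
        have hH := hHposIcc (p t) hpt
        have hgx := hgpos (p t) hpt.1 (lt_of_le_of_lt hpt.2 hθ1)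
        have h5 : f (p t) + u * g (p t) ≤ f (p t) + M * g (p t) :=
          add_le_add_right (mul_le_mul_of_nonneg_right hu2 hgx.le) _
        have h6 : (f (p t) + M * g (p t))⁻¹ * (f (p t) + u * g (p t)) ≤
            (f (p t) + M * g (p t))⁻¹ * (f (p t) + M * g (p t)) :=
          mul_le_mul_of_nonneg_left h5 (inv_nonneg.mpr hH.le)
        rw [inv_mul_cancel₀ hH.ne'] at h6
        linarith
    have hfin := hmono (Set.left_mem_Icc.mpr hsτ'.le) (Set.right_mem_Icc.mpr hsτ'.le) hsτ'.le
    rw [hψ_def] at hfin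
    simp only [hps0, hpτ, hΦ0] at hfin
    rw [hTstarΦ]
    linarith
  have reverse : Tstar ≤ T → ∃ ubar ∈ Set.Ioc mstar M, ∃ p : ℝ → ℝ, p 0 = 0 ∧
      (∀ t ∈ Set.Icc (0:ℝ) T, HasDerivAt p (f (p t) + ubar * g (p t)) t) ∧ θ ≤ p T := by
    intro hTT
    -- uniform bounds for denominator and numerator
    obtain ⟨x0, hx0, hδ'⟩ := isCompact_Icc.exists_isMinOn (Set.nonempty_Icc.mpr zero_le_one)
      hDcont.continuousOn
    have hδ := isMinOn_iff.mp hδ'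
    set δv := b1 * (1 - x0) * (1 - sh * x0) + b2 * x0 with hδv_def
    have hδpos : 0 < δv := hDpos x0 hx0.1 hx0.2
    have hNcont : Continuous (fun x : ℝ =>
        x * (d1 * b2 - d2 * b1 * (1 - sh * x)) + M / K * (b1 * (1 - sh * x))) := by fun_prop
    obtain ⟨x1, hx1, hB'⟩ := isCompact_Icc.exists_isMaxOn (Set.nonempty_Icc.mpr zero_le_one)
      hNcont.continuousOn
    have hB := isMaxOn_iff.mp hB'
    set Bv := x1 * (d1 * b2 - d2 * b1 * (1 - sh * x1)) + M / K * (b1 * (1 - sh * x1)) with hBv_def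
    have hBpos : 0 < Bv := by
      have h1 := hB θ ⟨hθpos.le, hθ1.le⟩
      have h2 : (1:ℝ) - sh * θ = d1 * b2 / (d2 * b1) := by rw [hshθ]; ring
      have h3 : d2 * b1 * (d1 * b2 / (d2 * b1)) = d1 * b2 := by field_simp
      have h4 : 0 < M / K * (b1 * (d1 * b2 / (d2 * b1))) := by positivity
      have h5 : θ * (d1 * b2 - d2 * b1 * (1 - sh * θ)) + M / K * (b1 * (1 - sh * θ)) =
          M / K * (b1 * (d1 * b2 / (d2 * b1))) := by rw [h2, h3]; ring
      rw [h5] at h1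
      exact lt_of_lt_of_le h4 h1
    set k := (T + 1) * Bv / δv with hk_def
    have hkpos : 0 < k := by
      rw [hk_def]; exact div_pos (mul_pos (by linarith) hBpos) hδpos
    set c := 1 - (1 - θ) * Real.exp (-k) with hc_def
    have hθ1' : 0 < 1 - θ := by linarith
    have hc1 : c < 1 := by
      have := Real.exp_pos (-k)
      rw [hc_def]; nlinarith
    have hθc : θ < c := by
      have h1 : Real.exp (-k) < 1 := Real.exp_lt_one_iff.mpr (by linarith)
      rw [hc_def]; nlinarith
    have hc0 : 0 < c := lt_trans hθpos hθc
    -- representation of f + M g with a single denominator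
    have hHrepr : ∀ ν : ℝ, f ν + M * g ν =
        (1 - ν) * (ν * (d1 * b2 - d2 * b1 * (1 - sh * ν)) + M / K * (b1 * (1 - sh * ν))) /
          (b1 * (1 - ν) * (1 - sh * ν) + b2 * ν) := by
      intro ν
      rw [hf, hg, ← mul_div_assoc, ← add_div]
      congr 1
      ring
    -- lower bound for the integrand on [θ, c]
    have hlower : ∀ ν ∈ Set.Icc θ c, δv / Bv * (1 - ν)⁻¹ ≤ (f ν + M * g ν)⁻¹ := by
      intro ν hν
      have hν0 : 0 ≤ ν := le_trans hθpos.le hν.1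
      have hν1 : ν < 1 := lt_of_le_of_lt hν.2 hc1
      have h1ν : 0 < 1 - ν := by linarith
      have hDν := hDpos ν hν0 hν1.le
      have hHν := hHpos ν hν0 hν1
      have hNB := hB ν ⟨hν0, hν1.le⟩
      have hle : f ν + M * g ν ≤ (1 - ν) * Bv / δv := by
        rw [hHrepr ν]
        exact div_le_div₀ (by positivity) (mul_le_mul_of_nonneg_left hNB h1ν.le) hδpos
          (hδ ν ⟨hν0, hν1.le⟩)
      have hinv := inv_anti₀ hHν hle
      have heq : ((1 - ν) * Bv / δv)⁻¹ = δv / Bv * (1 - ν)⁻¹ := by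
        rw [inv_div]
        field_simp
      linarith [heq ▸ hinv]
    have hint2 : IntervalIntegrable (fun ν : ℝ => δv / Bv * (1 - ν)⁻¹) volume θ c := by
      apply ContinuousOn.intervalIntegrable
      intro ν hν
      rw [Set.uIcc_of_le hθc.le] at hν
      have h1ν : (1:ℝ) - ν ≠ 0 := by
        have h' : ν < 1 := lt_of_le_of_lt hν.2 hc1
        intro hcon; rw [sub_eq_zero] at hcon; rw [← hcon] at h'; exact lt_irrefl _ h'
      exact (continuousAt_const.mul
        ((continuousAt_const.sub continuousAt_id).inv₀ h1ν)).continuousWithinAt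
    -- the explicit logarithmic integral
    have hlogint : ∫ ν in θ..c, δv / Bv * (1 - ν)⁻¹ = T + 1 := by
      have hderiv : ∀ ν ∈ Set.uIcc θ c, HasDerivAt (fun x => -(δv / Bv) * Real.log (1 - x))
          (δv / Bv * (1 - ν)⁻¹) ν := by
        intro ν hν
        rw [Set.uIcc_of_le hθc.le] at hν
        have h1ν : (1:ℝ) - ν ≠ 0 := by
          have : ν < 1 := lt_of_le_of_lt hν.2 hc1
          intro hcon; rw [sub_eq_zero] at hcon; rw [← hcon] at this; exact lt_irrefl _ this
        have h1 : HasDerivAt (fun x : ℝ => 1 - x) (-1) ν := by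
          simpa using (hasDerivAt_id ν).const_sub 1
        have h2 := (Real.hasDerivAt_log h1ν).comp ν h1
        have h3 := h2.const_mul (-(δv / Bv))
        have h4 : HasDerivAt (fun x => -(δv / Bv) * Real.log (1 - x))
            (-(δv / Bv) * ((1 - ν)⁻¹ * -1)) ν := h3
        convert h4 using 1
        ring
      rw [intervalIntegral.integral_eq_sub_of_hasDerivAt hderiv hint2]
      have h1c : (1:ℝ) - c = (1 - θ) * Real.exp (-k) := by rw [hc_def]; ring
      rw [h1c, Real.log_mul hθ1'.ne' (Real.exp_ne_zero _), Real.log_exp, hk_def]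
      field_simp
      ring
    -- T + 1 ≤ Φ c, hence T < Φ c
    have hintH : IntervalIntegrable (fun t => (f t + M * g t)⁻¹) volume θ c := by
      apply hII θ c
      · simp only [le_min_iff]; exact ⟨by linarith, by linarith⟩
      · simp only [max_lt_iff]; exact ⟨hθ1, hc1⟩
    have hΦc : T + 1 ≤ Φ c := by
      have hmono2 := intervalIntegral.integral_mono_on hθc.le hint2 hintH hlower
      rw [hlogint] at hmono2
      rw [hΦadd θ c (by linarith) hθc.le hc1]
      have hΦθ : Φ θ = Tstar := hTstarΦ.symm
      linarith
    have hTΦc : T < Φ c := by linarith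
    have hac : a < c := lt_trans ha0 hc0
    obtain ⟨F, hFdef⟩ : ∃ F : ℝ → ℝ, F = fun x =>
        if x < a then Φ a + (x - a) else if x ≤ c then Φ x else Φ c + (x - c) := ⟨_, rfl⟩
    have hFx : ∀ x, F x = if x < a then Φ a + (x - a) else if x ≤ c then Φ x else Φ c + (x - c) :=
      fun x => by rw [hFdef]
    have hFlt : ∀ x, x < a → F x = Φ a + (x - a) := by
      intro x hx; rw [hFx x, if_pos hx]
    have hFmid : ∀ x, a ≤ x → x ≤ c → F x = Φ x := by
      intro x h1 h2; rw [hFx x, if_neg (not_lt.mpr h1), if_pos h2]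
    have hFgt : ∀ x, c < x → F x = Φ c + (x - c) := by
      intro x hx
      rw [hFx x, if_neg (not_lt.mpr (le_trans hac.le hx.le)), if_neg (not_le.mpr hx)]
    have hFmono : StrictMono F := by
      intro x y hxy
      rcases lt_or_ge x a with h1|h1
      · rw [hFlt x h1]
        rcases lt_or_ge y a with h2|h2
        · rw [hFlt y h2]; linarith
        · rcases le_or_gt y c with h3|h3
          · rw [hFmid y h2 h3]
            have := hΦle a y le_rfl h2 (lt_of_le_of_lt h3 hc1)
            linarith
          · rw [hFgt y h3]
            have := hΦle a c le_rfl hac.le hc1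
            linarith
      · rcases le_or_gt x c with h2|h2
        · rw [hFmid x h1 h2]
          rcases le_or_gt y c with h3|h3
          · rw [hFmid y (le_trans h1 hxy.le) h3]
            exact hΦlt x y h1 hxy (lt_of_le_of_lt h3 hc1)
          · rw [hFgt y h3]
            have := hΦle x c h1 h2 hc1
            linarith
        · rw [hFgt x h2, hFgt y (lt_trans h2 hxy)]
          linarith
    have hFsurj : Function.Surjective F := by
      intro y
      rcases lt_or_ge y (Φ a) with h1|h1
      · refine ⟨a + (y - Φ a), ?_⟩
        rw [hFlt _ (by linarith)]; ring
      · rcases le_or_gt y (Φ c) with h2|h2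
        · have hΦcont' : ContinuousOn Φ (Set.Icc a c) := fun x hx =>
            ((hΦd x hx.1 (lt_of_le_of_lt hx.2 hc1)).continuousAt).continuousWithinAt
          obtain ⟨x, hx, hfx⟩ := intermediate_value_Icc hac.le hΦcont' ⟨h1, h2⟩
          exact ⟨x, by rw [hFmid x hx.1 hx.2]; exact hfx⟩
        · refine ⟨c + (y - Φ c), ?_⟩
          rw [hFgt _ (by linarith)]; ring
    set iso := StrictMono.orderIsoOfSurjective F hFmono hFsurj with hiso_def
    set p : ℝ → ℝ := fun t => iso.symm t with hp_def
    have hFp : ∀ t, F (p t) = t := fun t =>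
      StrictMono.orderIsoOfSurjective_self_symm_apply F hFmono hFsurj t
    have hpcont : Continuous p := OrderIso.continuous iso.symm
    have hpmono : Monotone p := fun x y hxy => iso.symm.monotone hxy
    have hF0 : F 0 = 0 := by rw [hFmid 0 (by linarith) (by linarith), hΦ0]
    have hp0 : p 0 = 0 := by
      have h1 : F (p 0) = F 0 := by rw [hFp 0, hF0]
      exact hFmono.injective h1
    have hFθ : F θ = Tstar := by rw [hFmid θ (by linarith) hθc.le, ← hTstarΦ]
    have hFc : F c = Φ c := hFmid c hac.le le_rfl
    have hpT : θ ≤ p T := by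
      have h1 : F θ ≤ F (p T) := by rw [hFp T, hFθ]; exact hTT
      exact hFmono.le_iff_le.mp h1
    refine ⟨M, ⟨hM, le_rfl⟩, p, hp0, ?_, hpT⟩
    intro t ht
    have hx1 : 0 ≤ p t := by rw [← hp0]; exact hpmono ht.1
    have hx2 : p t < c := by
      have h1 : F (p t) < F c := by rw [hFp t, hFc]; exact lt_of_le_of_lt ht.2 hTΦc
      exact hFmono.lt_iff_lt.mp h1
    have hx3 : p t < 1 := lt_trans hx2 hc1
    have hΦpt := hΦd (p t) (by linarith) hx3
    have hFloc : F =ᶠ[nhds (p t)] Φ := by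
      have hmem : Set.Ioo a c ∈ nhds (p t) := Ioo_mem_nhds (by linarith) hx2
      filter_upwards [hmem] with y hy
      exact hFmid y hy.1.le hy.2.le
    have hFd : HasDerivAt F ((f (p t) + M * g (p t))⁻¹) (p t) :=
      hΦpt.congr_of_eventuallyEq hFloc
    have hne : (f (p t) + M * g (p t))⁻¹ ≠ 0 :=
      inv_ne_zero (hHpos (p t) hx1 hx3).ne'
    have hfinal := HasDerivAt.of_local_left_inverse hpcont.continuousAt hFd hne
      (Filter.Eventually.of_forall hFp)
    simpa using hfinal
  exact ⟨forward, reverse⟩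
end

section
/- (Feasibility part of Theorem 1.) Assume M > m* and T ≥ T*. For every ξ ∈ [0, T − T*], let u_ξ = M·1_{(ξ, ξ+T*)} on [0,T]. Then the associated state p_{u_ξ} satisfies p_{u_ξ}(T) = θ, and the total cost is ∫₀^T u_ξ(t) dt = M·T*. -/
open Set MeasureTheory intervalIntegral Topology Filter


lemma gronwall_zero {a b L : ℝ} {φ : ℝ → ℝ} (hab : a ≤ b)
    (hφ : ContinuousOn φ (Set.Icc a b)) (hφ0 : ∀ t ∈ Set.Icc a b, 0 ≤ φ t)
    (hL : 0 ≤ L) (hbd : ∀ t ∈ Set.Icc a b, φ t ≤ L * ∫ s in a..t, φ s) :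
    ∀ t ∈ Set.Icc a b, φ t = 0 := by
  set c : ℝ → ℝ := fun t => min (max t a) b with hc
  have hcc : Continuous c := (continuous_id.max continuous_const).min continuous_const
  have hcm : ∀ t, c t ∈ Set.Icc a b := fun t =>
    ⟨le_min (le_max_right _ _) hab, min_le_right _ _⟩
  have hceq : ∀ t ∈ Set.Icc a b, c t = t := fun t ht => by
    simp [hc, max_eq_left ht.1, min_eq_right ht.2, ht.2]
  set ψ : ℝ → ℝ := fun t => φ (c t) with hψ
  have hψc : Continuous ψ := hφ.comp_continuous hcc hcm
  have hψ0 : ∀ t, 0 ≤ ψ t := fun t => hφ0 _ (hcm t)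
  have hψeq : ∀ t ∈ Set.Icc a b, ψ t = φ t := fun t ht => by rw [hψ]; simp only; rw [hceq t ht]
  set Ψ : ℝ → ℝ := fun t => ∫ s in a..t, ψ s with hΨ
  have hΨd : ∀ t, HasDerivAt Ψ (ψ t) t := fun t =>
    intervalIntegral.integral_hasDerivAt_right (hψc.intervalIntegrable _ _)
      (hψc.stronglyMeasurableAtFilter _ _) hψc.continuousAt
  have hΨc : ContinuousOn Ψ (Set.Icc a b) :=
    fun t _ => ((hΨd t).continuousAt).continuousWithinAt
  have hΨnn : ∀ t ∈ Set.Icc a b, 0 ≤ Ψ t := fun t ht =>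
    intervalIntegral.integral_nonneg ht.1 (fun s _ => hψ0 s)
  have key : ∀ t ∈ Set.Icc a b, ‖Ψ t‖ ≤ gronwallBound 0 L 0 (t - a) := by
    apply norm_le_gronwallBound_of_norm_deriv_right_le hΨc
      (fun x _ => (hΨd x).hasDerivWithinAt)
    · simp [hΨ]
    · intro x hx
      have hx' : x ∈ Set.Icc a b := ⟨hx.1, hx.2.le⟩
      have h1 : Ψ x = ∫ s in a..x, φ s := by
        apply intervalIntegral.integral_congr
        intro s hs
        rw [Set.uIcc_of_le hx.1] at hs
        exact hψeq s ⟨hs.1, hs.2.trans hx.2.le⟩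
      rw [Real.norm_eq_abs, Real.norm_eq_abs, abs_of_nonneg (hψ0 x),
        abs_of_nonneg (hΨnn x hx'), hψeq x hx', add_zero]
      calc φ x ≤ L * ∫ s in a..x, φ s := hbd x hx'
        _ = L * Ψ x := by rw [h1]
  intro t ht
  have h0 : Ψ t = 0 := by
    have := key t ht
    rw [gronwallBound_ε0] at this
    simp only [zero_mul] at this
    have h2 : |Ψ t| ≤ 0 := by simpa [Real.norm_eq_abs] using this
    simpa using abs_nonpos_iff.mp h2
  have h1 : Ψ t = ∫ s in a..t, φ s := by
    apply intervalIntegral.integral_congr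
    intro s hs
    rw [Set.uIcc_of_le ht.1] at hs
    exact hψeq s ⟨hs.1, hs.2.trans ht.2⟩
  have := hbd t ht
  rw [← h1, h0, mul_zero] at this
  exact le_antisymm this (hφ0 t ht)

lemma ode_unique {a b L δ : ℝ} {R : Set ℝ} {v : ℝ → ℝ → ℝ} {p q : ℝ → ℝ}
    (hab : a ≤ b) (hL : 0 ≤ L) (hδ : 0 < δ)
    (hp : ContinuousOn p (Set.Icc a b)) (hq : ContinuousOn q (Set.Icc a b))
    (hpa : p a = q a)
    (hqR : ∀ t ∈ Set.Icc a b, Set.Icc (q t - δ) (q t + δ) ⊆ R)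
    (hlip : ∀ t ∈ Set.Icc a b, ∀ x ∈ R, ∀ y ∈ R, |v t x - v t y| ≤ L * |x - y|)
    (hpeq : ∀ t ∈ Set.Icc a b, p t = p a + ∫ s in a..t, v s (p s))
    (hqeq : ∀ t ∈ Set.Icc a b, q t = q a + ∫ s in a..t, v s (q s))
    (hpii : ∀ c t, a ≤ c → c ≤ t → t ≤ b → (∀ s ∈ Set.Icc c t, p s ∈ R) →
      IntervalIntegrable (fun s => v s (p s)) MeasureTheory.volume c t)
    (hqii : ∀ c t, a ≤ c → c ≤ t → t ≤ b →
      IntervalIntegrable (fun s => v s (q s)) MeasureTheory.volume c t) :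
    Set.EqOn p q (Set.Icc a b) := by
  have hqRmem : ∀ t ∈ Set.Icc a b, q t ∈ R := fun t ht =>
    hqR t ht ⟨by linarith, by linarith⟩
  -- the extension step
  have step : ∀ c d, a ≤ c → c ≤ d → d ≤ b → Set.EqOn p q (Set.Icc a c) →
      (∀ s ∈ Set.Icc c d, p s ∈ R) → Set.EqOn p q (Set.Icc c d) := by
    intro c d hac hcd hdb heq hpR
    have hsub : Set.Icc c d ⊆ Set.Icc a b := Set.Icc_subset_Icc hac hdb
    have hiiqac : IntervalIntegrable (fun s => v s (q s)) volume a c :=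
      hqii a c le_rfl hac (hcd.trans hdb)
    have hiipac : IntervalIntegrable (fun s => v s (p s)) volume a c := by
      apply hiiqac.congr
      have : ∀ᵐ s ∂(volume.restrict (Set.uIoc a c)), s ∈ Set.uIoc a c :=
        (ae_restrict_iff' measurableSet_uIoc).mpr (Filter.Eventually.of_forall fun s hs => hs)
      intro s hs
      rw [Set.uIoc_of_le hac] at hs
      show v s (q s) = v s (p s)
      rw [heq ⟨hs.1.le, hs.2⟩]
    -- for each t ∈ [c,d]
    have key : ∀ t ∈ Set.Icc c d, p t - q t = ∫ s in c..t, (v s (p s) - v s (q s)) := by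
      intro t ht
      have htab : t ∈ Set.Icc a b := hsub ht
      have hiip : IntervalIntegrable (fun s => v s (p s)) volume c t :=
        hpii c t hac ht.1 (ht.2.trans hdb) (fun s hs => hpR s ⟨hs.1, hs.2.trans ht.2⟩)
      have hiiq : IntervalIntegrable (fun s => v s (q s)) volume c t :=
        hqii c t hac ht.1 (ht.2.trans hdb)
      have hsplitp : ∫ s in a..t, v s (p s) = (∫ s in a..c, v s (p s)) + ∫ s in c..t, v s (p s) :=
        (intervalIntegral.integral_add_adjacent_intervals hiipac hiip).symm
      have hsplitq : ∫ s in a..t, v s (q s) = (∫ s in a..c, v s (q s)) + ∫ s in c..t, v s (q s) :=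
        (intervalIntegral.integral_add_adjacent_intervals hiiqac hiiq).symm
      have hcongr : ∫ s in a..c, v s (p s) = ∫ s in a..c, v s (q s) := by
        apply intervalIntegral.integral_congr
        intro s hs
        rw [Set.uIcc_of_le hac] at hs
        show v s (p s) = v s (q s)
        rw [heq hs]
      rw [hpeq t htab, hqeq t htab, hpa, hsplitp, hsplitq, hcongr,
        intervalIntegral.integral_sub hiip hiiq]
      ring
    -- Gronwall
    set φ : ℝ → ℝ := fun t => |p t - q t| with hφdef
    have hφc : ContinuousOn φ (Set.Icc c d) :=
      ((hp.mono hsub).sub (hq.mono hsub)).abs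
    have hgr : ∀ t ∈ Set.Icc c d, φ t = 0 := by
      apply gronwall_zero hcd hφc (fun t _ => abs_nonneg _) hL
      intro t ht
      have hiidiff : IntervalIntegrable (fun s => v s (p s) - v s (q s)) volume c t :=
        (hpii c t hac ht.1 (ht.2.trans hdb) (fun s hs => hpR s ⟨hs.1, hs.2.trans ht.2⟩)).sub
          (hqii c t hac ht.1 (ht.2.trans hdb))
      calc φ t = |∫ s in c..t, (v s (p s) - v s (q s))| := by rw [hφdef]; simp only; rw [key t ht]
        _ ≤ ∫ s in c..t, |v s (p s) - v s (q s)| :=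
            intervalIntegral.abs_integral_le_integral_abs ht.1
        _ ≤ ∫ s in c..t, L * φ s := by
            apply intervalIntegral.integral_mono_on ht.1 hiidiff.abs
            · exact (continuous_const.continuousOn.mul
                ((hφc.mono (Set.Icc_subset_Icc le_rfl ht.2)))).intervalIntegrable_of_Icc ht.1
            · intro s hs
              have hsR : p s ∈ R := hpR s ⟨hs.1, hs.2.trans ht.2⟩
              have hsR' : q s ∈ R := hqRmem s (hsub ⟨hs.1, hs.2.trans ht.2⟩)
              exact hlip s (hsub ⟨hs.1, hs.2.trans ht.2⟩) _ hsR _ hsR'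
        _ = L * ∫ s in c..t, φ s := by rw [intervalIntegral.integral_const_mul]
    intro t ht
    have := hgr t ht
    have : |p t - q t| = 0 := this
    have := abs_eq_zero.mp this
    linarith [this]
  -- continuous induction
  set A : Set ℝ := {t | t ∈ Set.Icc a b ∧ Set.EqOn p q (Set.Icc a t)} with hA
  have hA0 : a ∈ A := ⟨⟨le_rfl, hab⟩, fun s hs => by
    have : s = a := le_antisymm hs.2 hs.1
    rw [this, hpa]⟩
  have hAne : A.Nonempty := ⟨a, hA0⟩
  have hAbdd : BddAbove A := ⟨b, fun t ht => ht.1.2⟩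
  set τ := sSup A with hτdef
  have hτmem : τ ∈ Set.Icc a b := ⟨le_csSup hAbdd hA0, csSup_le hAne fun t ht => ht.1.2⟩
  have hlt : ∀ s, a ≤ s → s < τ → p s = q s := by
    intro s hs hsτ
    obtain ⟨t, htA, hst⟩ := exists_lt_of_lt_csSup hAne hsτ
    exact htA.2 ⟨hs, hst.le⟩
  have hτeq : p τ = q τ := by
    rcases eq_or_lt_of_le hτmem.1 with h | h
    · rw [← h, hpa]
    · have hne : (𝓝[Set.Ioo a τ] τ).NeBot := right_nhdsWithin_Ioo_neBot h
      have hsub2 : Set.Ioo a τ ⊆ Set.Icc a b :=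
        fun s hs => ⟨hs.1.le, hs.2.le.trans hτmem.2⟩
      have h1 : Filter.Tendsto p (𝓝[Set.Ioo a τ] τ) (𝓝 (p τ)) :=
        ((hp τ hτmem).mono hsub2).tendsto
      have h2 : Filter.Tendsto q (𝓝[Set.Ioo a τ] τ) (𝓝 (q τ)) :=
        ((hq τ hτmem).mono hsub2).tendsto
      have h3 : Filter.Tendsto p (𝓝[Set.Ioo a τ] τ) (𝓝 (q τ)) := by
        apply h2.congr'
        filter_upwards [self_mem_nhdsWithin] with s hs
        exact (hlt s hs.1.le hs.2).symm
      exact tendsto_nhds_unique h3 h1 |>.symm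
  have hτA : τ ∈ A := by
    refine ⟨hτmem, fun s hs => ?_⟩
    rcases eq_or_lt_of_le hs.2 with h | h
    · rw [h]; exact hτeq
    · exact hlt s hs.1 h
  have hτb : τ = b := by
    by_contra hne
    have hτltb : τ < b := lt_of_le_of_ne hτmem.2 hne
    -- continuity of p at τ within Icc a b
    have hcw : ContinuousWithinAt p (Set.Icc a b) τ := hp τ hτmem
    rw [Metric.continuousWithinAt_iff] at hcw
    obtain ⟨η, hη, hcw⟩ := hcw (δ/2) (by linarith)
    set d := min b (τ + η/2) with hd
    have hτd : τ < d := lt_min hτltb (by linarith)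
    have hdb : d ≤ b := min_le_left _ _
    have hpRτ : ∀ s ∈ Set.Icc τ d, p s ∈ R := by
      intro s hs
      have hsab : s ∈ Set.Icc a b := ⟨hτmem.1.trans hs.1, hs.2.trans hdb⟩
      have hdist : dist s τ < η := by
        rw [Real.dist_eq, abs_of_nonneg (by linarith [hs.1])]
        have : s ≤ τ + η/2 := hs.2.trans (min_le_right _ _)
        linarith
      have := hcw hsab hdist
      rw [Real.dist_eq] at this
      have h1 : |p s - p τ| < δ/2 := this
      have h2 := abs_lt.mp h1
      apply hqR τ hτmem
      constructor <;> rw [← hτeq] <;> [linarith [h2.1]; linarith [h2.2]]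
    have heqcd : Set.EqOn p q (Set.Icc τ d) :=
      step τ d hτmem.1 hτd.le hdb hτA.2 hpRτ
    have hdA : d ∈ A := by
      refine ⟨⟨hτmem.1.trans hτd.le, hdb⟩, fun s hs => ?_⟩
      rcases le_or_gt s τ with h | h
      · exact hτA.2 ⟨hs.1, h⟩
      · exact heqcd ⟨h.le, hs.2⟩
    have := le_csSup hAbdd hdA
    linarith [hτd]
  rw [hτb] at hτA
  exact hτA.2



/-- A pair (u,p) is an admissible control/state pair on [0,T] with control bound M:
u is measurable with values in [0,M], and p is the (Carathéodory / absolutely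
continuous) solution of p' = f(p) + u·g(p) a.e. on (0,T) with p(0) = 0, expressed
through the equivalent integral formulation. -/
def IsTrajectory (f g : ℝ → ℝ) (T M : ℝ) (u p : ℝ → ℝ) : Prop :=
  Measurable u ∧ (∀ t, u t ∈ Set.Icc (0:ℝ) M) ∧
  ContinuousOn p (Set.Icc 0 T) ∧ p 0 = 0 ∧
  ∀ t ∈ Set.Icc (0:ℝ) T, p t = ∫ s in (0:ℝ)..t, (f (p s) + u s * g (p s))

set_option maxHeartbeats 4000000 in
/-- feasibility part of Theorem 1: for M > m*, T ≥ T* and any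
ξ ∈ [0, T-T*], the control u_ξ = M·1_{(ξ,ξ+T*)} steers the state to θ at time T,
and its total cost is ∫₀^T u_ξ = M·T*. -/
theorem stmt_10
    (b1 b2 d1 d2 K sh : ℝ)
    (hb1 : 0 < b1) (hb2 : 0 < b2) (hd1 : 0 < d1) (hd2 : 0 < d2)
    (hK : 0 < K) (hsh0 : 0 < sh) (hsh1 : sh ≤ 1)
    (hlow : 1 - sh < d1 * b2 / (d2 * b1)) (hhigh : d1 * b2 / (d2 * b1) < 1)
    (f g : ℝ → ℝ)
    (hf : ∀ p, f p = p * (1 - p) * (d1 * b2 - d2 * b1 * (1 - sh * p)) /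
      (b1 * (1 - p) * (1 - sh * p) + b2 * p))
    (hg : ∀ p, g p = (1 / K) * (b1 * (1 - p) * (1 - sh * p)) /
      (b1 * (1 - p) * (1 - sh * p) + b2 * p))
    (θ : ℝ) (hθ : θ = (1 / sh) * (1 - d1 * b2 / (d2 * b1)))
    (mstar : ℝ)
    (hmstar : IsGreatest ((fun p => -f p / g p) '' Set.Icc 0 θ) mstar)
    (M : ℝ) (hM : mstar < M)
    (Tstar : ℝ) (hTstar : Tstar = ∫ ν in (0:ℝ)..θ, (f ν + M * g ν)⁻¹)
    (T : ℝ) (hT : Tstar ≤ T)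
    (ξ : ℝ) (hξ : ξ ∈ Set.Icc (0:ℝ) (T - Tstar))
    (u : ℝ → ℝ) (hu : u = Set.indicator (Set.Ioo ξ (ξ + Tstar)) fun _ => M) :
    (∀ p : ℝ → ℝ, IsTrajectory f g T M u p → p T = θ) ∧
    (∫ t in (0:ℝ)..T, u t) = M * Tstar := by
  -- ## basic numeric facts
  have hd2b1 : (0:ℝ) < d2 * b1 := mul_pos hd2 hb1
  set r : ℝ := d1 * b2 / (d2 * b1) with hr
  have hr0 : 0 < r := div_pos (mul_pos hd1 hb2) hd2b1
  have hθeq : θ = (1 - r) / sh := by rw [hθ]; ring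
  have hθpos : 0 < θ := by rw [hθeq]; exact div_pos (by linarith) hsh0
  have hshθ : sh * θ = 1 - r := by rw [hθeq]; field_simp
  have hθlt1 : θ < 1 := by
    rw [hθeq, div_lt_one hsh0]; linarith
  have hshθlt1 : sh * θ < 1 := by rw [hshθ]; linarith
  -- ## the rational pieces
  set D : ℝ → ℝ := fun x => b1 * (1 - x) * (1 - sh * x) + b2 * x with hD
  set Nf : ℝ → ℝ := fun x => x * (1 - x) * (d1 * b2 - d2 * b1 * (1 - sh * x)) with hNf
  set Ng : ℝ → ℝ := fun x => 1 / K * (b1 * (1 - x) * (1 - sh * x)) with hNg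
  have hfD : ∀ x, f x = Nf x / D x := fun x => hf x
  have hgD : ∀ x, g x = Ng x / D x := fun x => hg x
  have hcD : Continuous D := by fun_prop
  have hcNf : Continuous Nf := by fun_prop
  have hcNg : Continuous Ng := by fun_prop
  have hDpos : ∀ x ∈ Set.Icc (0:ℝ) 1, 0 < D x := by
    intro x hx
    obtain ⟨hx0, hx1⟩ := hx
    rcases eq_or_lt_of_le hx0 with h | h
    · simp only [hD, ← h]; nlinarith
    · have h1 : 0 ≤ b1 * (1 - x) * (1 - sh * x) := by
        have ha : (0:ℝ) ≤ 1 - x := by linarith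
        have hb : (0:ℝ) ≤ 1 - sh * x := by nlinarith
        exact mul_nonneg (mul_nonneg hb1.le ha) hb
      have h2 : 0 < b2 * x := mul_pos hb2 h
      simp only [hD]; nlinarith
  -- the good open set
  set U : Set ℝ := {x | 0 < D x ∧ 0 < Nf x + M * Ng x} with hUdef
  have hUopen : IsOpen U := by
    have h1 : IsOpen {x : ℝ | 0 < D x} := isOpen_lt continuous_const hcD
    have h2 : IsOpen {x : ℝ | 0 < Nf x + M * Ng x} :=
      isOpen_lt continuous_const (hcNf.add (continuous_const.mul hcNg))
    exact h1.inter h2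
  have hIccsub1 : Set.Icc (0:ℝ) θ ⊆ Set.Icc (0:ℝ) 1 :=
    Set.Icc_subset_Icc le_rfl hθlt1.le
  have hgpos : ∀ x ∈ Set.Icc (0:ℝ) θ, 0 < g x := by
    intro x hx
    have hx1 : x < 1 := lt_of_le_of_lt hx.2 hθlt1
    have hsx : sh * x < 1 := by nlinarith [hx.2]
    have hNgx : 0 < Ng x := by
      simp only [hNg]
      have h1 : 0 < 1 - x := by linarith
      have h2 : 0 < 1 - sh * x := by linarith
      have h3 : 0 < 1 / K := by positivity
      exact mul_pos h3 (mul_pos (mul_pos hb1 h1) h2)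
    rw [hgD]
    exact div_pos hNgx (hDpos x (hIccsub1 hx))
  have hsubU : Set.Icc (0:ℝ) θ ⊆ U := by
    intro x hx
    have hDx : 0 < D x := hDpos x (hIccsub1 hx)
    have hgx : 0 < g x := hgpos x hx
    have hub : -f x / g x ≤ mstar := hmstar.2 ⟨x, hx, rfl⟩
    have hflt : -f x < M * g x := by
      have h1 : -f x / g x < M := lt_of_le_of_lt hub hM
      calc -f x = (-f x / g x) * g x := by field_simp
        _ < M * g x := by exact mul_lt_mul_of_pos_right h1 hgx
    have hpos : 0 < f x + M * g x := by linarith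
    have hquot : f x + M * g x = (Nf x + M * Ng x) / D x := by
      rw [hfD, hgD]; field_simp
    refine ⟨hDx, ?_⟩
    have : 0 < (Nf x + M * Ng x) / D x := hquot ▸ hpos
    calc (0:ℝ) = 0 * D x := by ring
      _ < (Nf x + M * Ng x) / D x * D x := by exact mul_lt_mul_of_pos_right this hDx
      _ = Nf x + M * Ng x := by field_simp
  -- thickening: a compact margin δ0
  obtain ⟨δ1, hδ1pos, hthick⟩ :=
    (isCompact_Icc : IsCompact (Set.Icc (0:ℝ) θ)).exists_thickening_subset_open hUopen hsubU
  set δ0 : ℝ := min (δ1 / 2) ((1 - θ) / 2) with hδ0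
  have hδ0pos : 0 < δ0 := lt_min (by linarith) (by linarith)
  have hδ0le : δ0 ≤ δ1 / 2 := min_le_left _ _
  have hθδ1 : θ + δ0 < 1 := by
    have := min_le_right (δ1 / 2) ((1 - θ) / 2)
    simp only [← hδ0] at this; linarith
  set R : Set ℝ := Set.Icc (-δ0) (θ + δ0) with hRdef
  have hRU : R ⊆ U := by
    intro x hx
    apply hthick
    rw [Metric.mem_thickening_iff]
    refine ⟨max 0 (min x θ), ?_, ?_⟩
    · constructor
      · exact le_max_left _ _
      · exact max_le hθpos.le (min_le_right _ _)
    · rw [Real.dist_eq]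
      have hb : |x - max 0 (min x θ)| ≤ δ0 := by
        rcases le_total x 0 with h | h
        · have h1 : min x θ = x := min_eq_left (by linarith)
          rw [h1, max_eq_left h]
          rw [abs_of_nonpos (by linarith)]
          have := hx.1; simp only [hRdef] at *; linarith
        · rcases le_total x θ with h2 | h2
          · rw [min_eq_left h2, max_eq_right h]
            simp [abs_nonneg, hδ0pos.le, sub_self]
          · rw [min_eq_right h2, max_eq_right hθpos.le]
            rw [abs_of_nonneg (by linarith)]
            have := hx.2; linarith
      linarith
  have hIccR : Set.Icc (0:ℝ) θ ⊆ R := by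
    intro x hx; exact ⟨by linarith [hx.1], by linarith [hx.2]⟩
  set Uoo : Set ℝ := Set.Ioo (-δ0) (θ + δ0) with hUoo
  have hUooR : Uoo ⊆ R := Set.Ioo_subset_Icc_self
  have hUooU : Uoo ⊆ U := hUooR.trans hRU
  have hIccUoo : Set.Icc (0:ℝ) θ ⊆ Uoo := fun x hx =>
    ⟨by linarith [hx.1], by linarith [hx.2]⟩
  -- positivity of f + M g on U, continuity of f, g on U
  have hquotU : ∀ x ∈ U, f x + M * g x = (Nf x + M * Ng x) / D x := by
    intro x hx; rw [hfD, hgD]; field_simp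
  have hhpos : ∀ x ∈ U, 0 < f x + M * g x := by
    intro x hx
    rw [hquotU x hx]
    exact div_pos hx.2 hx.1
  have hfc : ContinuousOn f U := by
    have : ContinuousOn (fun x => Nf x / D x) U :=
      (hcNf.continuousOn).div (hcD.continuousOn) (fun x hx => (hx.1).ne')
    exact this.congr (fun x _ => hfD x)
  have hgc : ContinuousOn g U := by
    have : ContinuousOn (fun x => Ng x / D x) U :=
      (hcNg.continuousOn).div (hcD.continuousOn) (fun x hx => (hx.1).ne')
    exact this.congr (fun x _ => hgD x)
  set hinv : ℝ → ℝ := fun x => (f x + M * g x)⁻¹ with hinvdef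
  have hinvc : ContinuousOn hinv U :=
    (hfc.add (continuousOn_const.mul hgc)).inv₀ (fun x hx => (hhpos x hx).ne')
  have hinvpos : ∀ x ∈ U, 0 < hinv x := fun x hx => inv_pos.mpr (hhpos x hx)
  -- the primitive G
  set G : ℝ → ℝ := fun x => ∫ ν in (0:ℝ)..x, hinv ν with hGdef
  have hTG : Tstar = G θ := hTstar
  have h0Uoo : (0:ℝ) ∈ Uoo := hIccUoo ⟨le_rfl, hθpos.le⟩
  have hθUoo : θ ∈ Uoo := hIccUoo ⟨hθpos.le, le_rfl⟩
  have hUooOrd : Set.OrdConnected Uoo := Set.ordConnected_Ioo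
  have hinvii : ∀ x ∈ Uoo, ∀ y ∈ Uoo, IntervalIntegrable hinv volume x y := by
    intro x hx y hy
    apply ContinuousOn.intervalIntegrable
    exact hinvc.mono ((hUooOrd.uIcc_subset hx hy).trans hUooU)
  have hGderiv : ∀ x ∈ Uoo, HasDerivAt G (hinv x) x := by
    intro x hx
    apply intervalIntegral.integral_hasDerivAt_right (hinvii 0 h0Uoo x hx)
    · exact hinvc.stronglyMeasurableAtFilter hUopen x (hUooU hx)
    · exact hinvc.continuousAt (hUopen.mem_nhds (hUooU hx))
  have hGcontOn : ContinuousOn G (Set.Icc 0 θ) := fun x hx =>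
    ((hGderiv x (hIccUoo hx)).continuousAt).continuousWithinAt
  have hGdiff : ∀ x y, x ∈ Uoo → y ∈ Uoo → x < y → G x < G y := by
    intro x y hx hy hxy
    have hii1 : IntervalIntegrable hinv volume x y := hinvii x hx y hy
    have hsub : Set.Icc x y ⊆ U := by
      intro z hz
      exact hUooU ⟨lt_of_lt_of_le hx.1 hz.1, lt_of_le_of_lt hz.2 hy.2⟩
    have h2 : 0 < ∫ ν in x..y, hinv ν := by
      apply intervalIntegral.integral_pos hxy (hinvc.mono hsub)
      · exact fun z hz => (hinvpos z (hsub ⟨hz.1.le, hz.2⟩)).le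
      · exact ⟨x, ⟨le_rfl, hxy.le⟩, hinvpos x (hUooU hx)⟩
    have h3 : G y = G x + ∫ ν in x..y, hinv ν :=
      (intervalIntegral.integral_add_adjacent_intervals (hinvii 0 h0Uoo x hx) hii1).symm
    linarith
  have hGmono : StrictMonoOn G (Set.Icc 0 θ) := fun x hx y hy hxy =>
    hGdiff x y (hIccUoo hx) (hIccUoo hy) hxy
  have hG0 : G 0 = 0 := intervalIntegral.integral_same
  have hTpos : 0 < Tstar := by
    rw [hTG, ← hG0]
    exact hGdiff 0 θ h0Uoo hθUoo hθpos
  -- ## the inverse function ψ of G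
  set St : ℝ → Set ℝ := fun t => {x | x ∈ Set.Icc 0 θ ∧ G x ≤ t} with hStdef
  set ψ : ℝ → ℝ := fun t => sSup (St t) with hψdef
  have hSne : ∀ t, 0 ≤ t → (St t).Nonempty := fun t ht =>
    ⟨0, ⟨le_rfl, hθpos.le⟩, by rw [hG0]; exact ht⟩
  have hSbdd : ∀ t, BddAbove (St t) := fun t => ⟨θ, fun x hx => hx.1.2⟩
  have hSclosed : ∀ t, IsClosed (St t) := by
    intro t
    have : St t = Set.Icc 0 θ ∩ G ⁻¹' Set.Iic t := rfl
    rw [this]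
    exact hGcontOn.preimage_isClosed_of_isClosed isClosed_Icc isClosed_Iic
  have hψS : ∀ t, 0 ≤ t → ψ t ∈ St t := fun t ht =>
    (hSclosed t).csSup_mem (hSne t ht) (hSbdd t)
  have hψmem : ∀ t, 0 ≤ t → ψ t ∈ Set.Icc 0 θ := fun t ht => (hψS t ht).1
  have hGθT : G θ = Tstar := hTG.symm
  have hGψ : ∀ t ∈ Set.Icc 0 Tstar, G (ψ t) = t := by
    rintro t ⟨ht0, htT⟩
    have h1 : G (ψ t) ≤ t := (hψS t ht0).2
    by_contra hne
    have hlt : G (ψ t) < t := lt_of_le_of_ne h1 hne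
    have hψθ : ψ t < θ := by
      rcases lt_or_eq_of_le (hψmem t ht0).2 with h | h
      · exact h
      · exfalso; rw [h, hGθT] at hlt; linarith
    have hcA : ContinuousAt G (ψ t) :=
      (hGderiv (ψ t) (hIccUoo (hψmem t ht0))).continuousAt
    have hev : G ⁻¹' Set.Iio t ∈ 𝓝 (ψ t) :=
      hcA.preimage_mem_nhds (Iio_mem_nhds hlt)
    obtain ⟨ε, hε, hball⟩ := Metric.mem_nhds_iff.mp hev
    set x : ℝ := min (ψ t + ε / 2) θ with hxdef
    have hxgt : ψ t < x := lt_min (by linarith) hψθ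
    have hxball : x ∈ Metric.ball (ψ t) ε := by
      rw [Metric.mem_ball, Real.dist_eq, abs_of_nonneg (by linarith)]
      have : x ≤ ψ t + ε / 2 := min_le_left _ _
      linarith
    have hxS : x ∈ St t := by
      refine ⟨⟨le_trans (hψmem t ht0).1 hxgt.le, min_le_right _ _⟩, ?_⟩
      exact (hball hxball).le
    have := le_csSup (hSbdd t) hxS
    change x ≤ ψ t at this
    linarith
  have hGrange : ∀ x ∈ Set.Icc 0 θ, G x ∈ Set.Icc 0 Tstar := by
    intro x hx
    constructor
    · rw [← hG0]
      rcases eq_or_lt_of_le hx.1 with h | h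
      · rw [← h]
      · exact (hGdiff 0 x h0Uoo (hIccUoo hx) h).le
    · rw [← hGθT]
      rcases eq_or_lt_of_le hx.2 with h | h
      · rw [h]
      · exact (hGdiff x θ (hIccUoo hx) hθUoo h).le
  have hψG : ∀ x ∈ Set.Icc (0:ℝ) θ, ψ (G x) = x := by
    intro x hx
    have h1 : G (ψ (G x)) = G x := hGψ (G x) (hGrange x hx)
    exact hGmono.injOn (hψmem (G x) (hGrange x hx).1) hx h1
  have hψ0 : ψ 0 = 0 := by
    have := hψG 0 ⟨le_rfl, hθpos.le⟩
    rwa [hG0] at this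
  have hψT : ψ Tstar = θ := by
    have := hψG θ ⟨hθpos.le, le_rfl⟩
    rwa [hGθT] at this
  have hψmono : ∀ s t, 0 ≤ s → s ≤ t → ψ s ≤ ψ t := by
    intro s t hs hst
    exact csSup_le_csSup (hSbdd t) (hSne s hs) (fun x hx => ⟨hx.1, hx.2.trans hst⟩)
  have hψstrict : ∀ s t, s ∈ Set.Icc (0:ℝ) Tstar → t ∈ Set.Icc (0:ℝ) Tstar → s < t →
      ψ s < ψ t := by
    intro s t hs ht hst
    rcases lt_or_eq_of_le (hψmono s t hs.1 hst.le) with h | h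
    · exact h
    · exfalso
      have := hGψ s hs
      rw [h, hGψ t ht] at this
      linarith
  -- continuity of ψ
  have hψsurj : ∀ y ∈ Set.Icc (0:ℝ) θ, ∃ c ∈ Set.Icc (0:ℝ) Tstar, ψ c = y := by
    intro y hy
    exact ⟨G y, hGrange y hy, hψG y hy⟩
  have hψcontR : ∀ τ ∈ Set.Ico (0:ℝ) Tstar, ContinuousWithinAt ψ (Set.Ici τ) τ := by
    intro τ hτ
    have hτIcc : τ ∈ Set.Icc (0:ℝ) Tstar := ⟨hτ.1, hτ.2.le⟩
    have hmono : StrictMonoOn ψ (Set.Icc (0:ℝ) Tstar) := by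
      intro s hs t ht hst; exact hψstrict s t hs ht hst
    apply hmono.continuousWithinAt_right_of_exists_between
      (Icc_mem_nhdsGE_of_mem ⟨hτ.1, hτ.2⟩)
    intro b hb
    have hψτθ : ψ τ < θ := by
      rw [← hψT]
      exact hψstrict τ Tstar hτIcc ⟨hTpos.le, le_rfl⟩ hτ.2
    set x : ℝ := min b θ with hx
    have hx1 : ψ τ < x := lt_min hb hψτθ
    have hx2 : x ∈ Set.Icc (0:ℝ) θ :=
      ⟨le_trans (hψmem τ hτ.1).1 hx1.le, min_le_right _ _⟩
    exact ⟨G x, hGrange x hx2, by rw [hψG x hx2]; exact ⟨hx1, min_le_left _ _⟩⟩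
  have hψcontL : ∀ τ ∈ Set.Ioc (0:ℝ) Tstar, ContinuousWithinAt ψ (Set.Iic τ) τ := by
    intro τ hτ
    have hτIcc : τ ∈ Set.Icc (0:ℝ) Tstar := ⟨hτ.1.le, hτ.2⟩
    have hmono : StrictMonoOn ψ (Set.Icc (0:ℝ) Tstar) := by
      intro s hs t ht hst; exact hψstrict s t hs ht hst
    have hmem : Set.Icc (0:ℝ) Tstar ∈ 𝓝[≤] τ := by
      apply Icc_mem_nhdsLE_of_mem ⟨hτ.1, hτ.2⟩
    apply hmono.continuousWithinAt_left_of_exists_between hmem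
    intro b hb
    have hψτ0 : 0 < ψ τ := by
      rw [← hψ0]
      exact hψstrict 0 τ ⟨le_rfl, hTpos.le⟩ hτIcc hτ.1
    set x : ℝ := max b 0 with hx
    have hx1 : x < ψ τ := max_lt hb hψτ0
    have hx2 : x ∈ Set.Icc (0:ℝ) θ :=
      ⟨le_max_right _ _, le_trans hx1.le (hψmem τ hτ.1.le).2⟩
    exact ⟨G x, hGrange x hx2, by rw [hψG x hx2]; exact ⟨le_max_left _ _, hx1⟩⟩
  have hψcontAt : ∀ τ ∈ Set.Ioo (0:ℝ) Tstar, ContinuousAt ψ τ := by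
    intro τ hτ
    apply continuousAt_iff_continuous_left_right.2
    exact ⟨hψcontL τ ⟨hτ.1, hτ.2.le⟩, hψcontR τ ⟨hτ.1.le, hτ.2⟩⟩
  have hψcont : ContinuousOn ψ (Set.Icc 0 Tstar) := by
    intro τ hτ
    rcases eq_or_lt_of_le hτ.1 with h | h
    · subst h
      exact (hψcontR 0 ⟨le_rfl, hTpos⟩).mono Set.Icc_subset_Ici_self
    · rcases eq_or_lt_of_le hτ.2 with h2 | h2
      · exact (hψcontL τ ⟨h, hτ.2⟩).mono (by rw [h2]; exact Set.Icc_subset_Iic_self)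
      · exact (hψcontAt τ ⟨h, h2⟩).continuousWithinAt
  -- derivative of ψ
  have hψderiv : ∀ τ ∈ Set.Ioo (0:ℝ) Tstar, HasDerivAt ψ (f (ψ τ) + M * g (ψ τ)) τ := by
    intro τ hτ
    have hτIcc : τ ∈ Set.Icc (0:ℝ) Tstar := ⟨hτ.1.le, hτ.2.le⟩
    set x : ℝ := ψ τ with hxd
    have hxmem : x ∈ Set.Icc (0:ℝ) θ := hψmem τ hτ.1.le
    have hGd : HasDerivAt G (hinv x) x := hGderiv x (hIccUoo hxmem)
    have hinvne : hinv x ≠ 0 := (hinvpos x (hUooU (hIccUoo hxmem))).ne'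
    have hcA : ContinuousAt ψ τ := hψcontAt τ hτ
    have hev : ∀ᶠ y in 𝓝 τ, G (ψ y) = y := by
      filter_upwards [Ioo_mem_nhds hτ.1 hτ.2] with y hy
      exact hGψ y ⟨hy.1.le, hy.2.le⟩
    have := HasDerivAt.of_local_left_inverse hcA hGd hinvne hev
    have hfix : (hinv x)⁻¹ = f x + M * g x := by
      rw [hinvdef]; simp only; rw [inv_inv]
    rwa [hfix] at this
  -- ## the reference trajectory q
  have hξ0 : 0 ≤ ξ := hξ.1
  have hξT : ξ + Tstar ≤ T := by have := hξ.2; linarith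
  have hT0 : (0:ℝ) ≤ T := le_trans hTpos.le hT
  set cl : ℝ → ℝ := fun t => min (max (t - ξ) 0) Tstar with hcl
  have hclcont : Continuous cl := by fun_prop
  have hclmem : ∀ t, cl t ∈ Set.Icc (0:ℝ) Tstar := fun t =>
    ⟨le_min (le_max_right _ _) hTpos.le, min_le_right _ _⟩
  set q : ℝ → ℝ := fun t => ψ (cl t) with hqdef
  have hq1 : ∀ t, t ≤ ξ → q t = 0 := by
    intro t ht
    have : cl t = 0 := by
      simp only [hcl]
      rw [max_eq_right (by linarith), min_eq_left hTpos.le]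
    rw [hqdef]; simp only; rw [this, hψ0]
  have hq2 : ∀ t, ξ ≤ t → t ≤ ξ + Tstar → q t = ψ (t - ξ) := by
    intro t ht1 ht2
    have : cl t = t - ξ := by
      simp only [hcl]
      rw [max_eq_left (by linarith), min_eq_left (by linarith)]
    rw [hqdef]; simp only; rw [this]
  have hq3 : ∀ t, ξ + Tstar ≤ t → q t = θ := by
    intro t ht
    have : cl t = Tstar := by
      simp only [hcl]
      rw [max_eq_left (by linarith), min_eq_right (by linarith)]
    rw [hqdef]; simp only; rw [this, hψT]
  have hqmem : ∀ t, q t ∈ Set.Icc (0:ℝ) θ := fun t => hψmem _ (hclmem t).1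
  have hqcont : Continuous q := hψcont.comp_continuous hclcont hclmem
  -- values of f at the ends
  have hf0 : f 0 = 0 := by rw [hf]; simp
  have hfθ : f θ = 0 := by
    have h1 : (1:ℝ) - sh * θ = r := by rw [hshθ]; ring
    have h2 : d2 * b1 * r = d1 * b2 := by rw [hr]; field_simp
    rw [hf, h1, h2]
    simp
  -- control facts
  have hM0 : 0 < M := by
    have h0img : (0:ℝ) ∈ (fun p => -f p / g p) '' Set.Icc 0 θ :=
      ⟨0, ⟨le_rfl, hθpos.le⟩, by show -f 0 / g 0 = 0; rw [hf0]; simp⟩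
    have := hmstar.2 h0img
    linarith
  have huval : ∀ s, u s = if s ∈ Set.Ioo ξ (ξ + Tstar) then M else 0 := by
    intro s
    rw [hu]
    by_cases h : s ∈ Set.Ioo ξ (ξ + Tstar)
    · rw [Set.indicator_of_mem h, if_pos h]
    · rw [Set.indicator_of_notMem h, if_neg h]
  have hu0 : ∀ s, s ∉ Set.Ioo ξ (ξ + Tstar) → u s = 0 := by
    intro s h; rw [huval, if_neg h]
  have huM : ∀ s, s ∈ Set.Ioo ξ (ξ + Tstar) → u s = M := by
    intro s h; rw [huval, if_pos h]
  have hubd : ∀ s, 0 ≤ u s ∧ u s ≤ M := by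
    intro s
    rw [huval]
    by_cases h : s ∈ Set.Ioo ξ (ξ + Tstar)
    · rw [if_pos h]; exact ⟨hM0.le, le_rfl⟩
    · rw [if_neg h]; exact ⟨le_rfl, hM0.le⟩
  have humeas : Measurable u := by
    rw [hu]; exact (measurable_const.indicator measurableSet_Ioo)
  -- the integrand along q
  set w : ℝ → ℝ := fun s => f (q s) + u s * g (q s) with hwdef
  have hfqc : Continuous fun s => f (q s) :=
    (hfc.mono hsubU).comp_continuous hqcont (fun t => hqmem t)
  have hgqc : Continuous fun s => g (q s) :=
    (hgc.mono hsubU).comp_continuous hqcont (fun t => hqmem t)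
  obtain ⟨Cg, hCg⟩ := (isCompact_Icc.image_of_continuousOn
    (hgc.mono hsubU)).exists_bound_of_continuousOn continuousOn_id
  have hgbd : ∀ x ∈ Set.Icc (0:ℝ) θ, ‖g x‖ ≤ Cg := by
    intro x hx
    exact hCg (g x) ⟨x, hx, rfl⟩
  have hwii : ∀ c d : ℝ, IntervalIntegrable w volume c d := by
    intro c d
    apply IntervalIntegrable.add
    · exact hfqc.intervalIntegrable c d
    · rw [intervalIntegrable_iff]
      haveI : IsFiniteMeasure (volume.restrict (Set.uIoc c d)) := by
        constructor
        rw [Measure.restrict_apply_univ, Set.uIoc]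
        exact measure_Ioc_lt_top
      apply MeasureTheory.Integrable.mono' (integrable_const (M * Cg))
      · exact (humeas.aestronglyMeasurable.mul
          (hgqc.aestronglyMeasurable)).restrict
      · apply Filter.Eventually.of_forall
        intro s
        rw [norm_mul]
        have h1 : ‖u s‖ ≤ M := by
          rw [Real.norm_eq_abs, abs_of_nonneg (hubd s).1]; exact (hubd s).2
        have h2 : ‖g (q s)‖ ≤ Cg := hgbd _ (hqmem s)
        exact mul_le_mul h1 h2 (norm_nonneg _) hM0.le
  -- FTC on the middle piece
  have hmid : ∀ t, ξ ≤ t → t ≤ ξ + Tstar →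
      (∫ s in ξ..t, (f (q s) + M * g (q s))) = ψ (t - ξ) := by
    intro t ht1 ht2
    have hqξ : q ξ = 0 := hq1 ξ le_rfl
    have hderiv : ∀ s ∈ Set.Ioo ξ t, HasDerivAt q (f (q s) + M * g (q s)) s := by
      intro s hs
      have hsmem : s - ξ ∈ Set.Ioo (0:ℝ) Tstar := ⟨by linarith [hs.1], by linarith [hs.2]⟩
      have h1 : HasDerivAt (fun y => ψ (y - ξ))
          ((f (ψ (s - ξ)) + M * g (ψ (s - ξ))) * 1) s :=
        by have := HasDerivAt.comp s (hψderiv (s - ξ) hsmem) ((hasDerivAt_id' s).sub_const ξ); exact this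
      rw [mul_one] at h1
      have hqs : q s = ψ (s - ξ) := hq2 s hs.1.le (by linarith [hs.2])
      have hev : q =ᶠ[𝓝 s] fun y => ψ (y - ξ) := by
        filter_upwards [Ioo_mem_nhds hs.1 (lt_of_lt_of_le hs.2 ht2)] with y hy
        exact hq2 y hy.1.le hy.2.le
      rw [hqs]
      exact h1.congr_of_eventuallyEq hev
    have hFi : IntervalIntegrable (fun s => f (q s) + M * g (q s)) volume ξ t :=
      (hfqc.add (continuous_const.mul hgqc)).intervalIntegrable ξ t
    have := intervalIntegral.integral_eq_sub_of_hasDerivAt_of_le ht1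
      (hqcont.continuousOn) hderiv hFi
    rw [this, hqξ, hq2 t ht1 ht2, sub_zero]
  have hIfirst : ∀ t, 0 ≤ t → t ≤ ξ → (∫ s in (0:ℝ)..t, w s) = 0 := by
    intro t ht0 htξ
    have : Set.EqOn w (fun _ => (0:ℝ)) (Set.uIcc 0 t) := by
      intro s hs
      rw [Set.uIcc_of_le ht0] at hs
      have hsξ : s ≤ ξ := hs.2.trans htξ
      have h1 : u s = 0 := hu0 s (fun hc => absurd hc.1 (not_lt.mpr hsξ))
      simp only [hwdef]
      rw [hq1 s hsξ, h1, hf0, zero_mul, add_zero]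
    rw [intervalIntegral.integral_congr this]
    simp
  have hImid : ∀ t, ξ ≤ t → t ≤ ξ + Tstar → (∫ s in ξ..t, w s) = ψ (t - ξ) := by
    intro t ht1 ht2
    have hae : ∀ᵐ s ∂(volume : Measure ℝ), s ≠ ξ + Tstar := by
      rw [ae_iff]
      have : {s : ℝ | ¬ s ≠ ξ + Tstar} = {ξ + Tstar} := by
        ext s; simp
      rw [this]
      exact measure_singleton _
    have hcongr : ∫ s in ξ..t, w s = ∫ s in ξ..t, (f (q s) + M * g (q s)) := by
      apply intervalIntegral.integral_congr_ae
      filter_upwards [hae] with s hsne hs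
      rw [Set.uIoc_of_le ht1] at hs
      have hsmem : s ∈ Set.Ioo ξ (ξ + Tstar) := by
        constructor
        · exact hs.1
        · rcases lt_or_eq_of_le (hs.2.trans ht2) with h | h
          · exact h
          · exact absurd h hsne
      simp only [hwdef]
      rw [huM s hsmem]
    rw [hcongr]
    exact hmid t ht1 ht2
  have hIlast : ∀ t, ξ + Tstar ≤ t → (∫ s in (ξ + Tstar)..t, w s) = 0 := by
    intro t ht
    have : Set.EqOn w (fun _ => (0:ℝ)) (Set.uIcc (ξ + Tstar) t) := by
      intro s hs
      rw [Set.uIcc_of_le ht] at hs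
      have h1 : u s = 0 := hu0 s (fun hc => absurd hc.2 (not_lt.mpr hs.1))
      simp only [hwdef]
      rw [hq3 s hs.1, h1, hfθ, zero_mul, add_zero]
    rw [intervalIntegral.integral_congr this]
    simp
  have hqeqI : ∀ t ∈ Set.Icc (0:ℝ) T, q t = ∫ s in (0:ℝ)..t, w s := by
    rintro t ⟨ht0, htT⟩
    rcases le_or_gt t ξ with h | h
    · rw [hIfirst t ht0 h, hq1 t h]
    · rcases le_or_gt t (ξ + Tstar) with h2 | h2
      · have hsplit : ∫ s in (0:ℝ)..t, w s =
            (∫ s in (0:ℝ)..ξ, w s) + ∫ s in ξ..t, w s :=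
          (intervalIntegral.integral_add_adjacent_intervals (hwii 0 ξ) (hwii ξ t)).symm
        rw [hsplit, hIfirst ξ hξ0 le_rfl, hImid t h.le h2, zero_add, hq2 t h.le h2]
      · have hsplit : ∫ s in (0:ℝ)..t, w s =
            (∫ s in (0:ℝ)..(ξ + Tstar), w s) + ∫ s in (ξ + Tstar)..t, w s :=
          (intervalIntegral.integral_add_adjacent_intervals (hwii 0 (ξ + Tstar))
            (hwii (ξ + Tstar) t)).symm
        have hfirst : (∫ s in (0:ℝ)..(ξ + Tstar), w s) = θ := by
          have hsplit2 : ∫ s in (0:ℝ)..(ξ + Tstar), w s =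
              (∫ s in (0:ℝ)..ξ, w s) + ∫ s in ξ..(ξ + Tstar), w s :=
            (intervalIntegral.integral_add_adjacent_intervals (hwii 0 ξ)
              (hwii ξ (ξ + Tstar))).symm
          rw [hsplit2, hIfirst ξ hξ0 le_rfl, hImid (ξ + Tstar) (by linarith) le_rfl,
            zero_add, add_sub_cancel_left, hψT]
        rw [hsplit, hfirst, hIlast t h2.le, add_zero, hq3 t h2.le]
  -- ## Lipschitz bounds on R
  have hRconv : Convex ℝ R := convex_Icc _ _
  have hRcompact : IsCompact R := isCompact_Icc
  have hcNfM : Continuous fun x => Nf x + M * Ng x := by fun_prop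
  have hfC1 : ContDiffOn ℝ 1 f U := by
    have h1 : ContDiff ℝ 1 Nf := by
      simp only [hNf]; fun_prop
    have h2 : ContDiff ℝ 1 D := by
      simp only [hD]; fun_prop
    have h3 : ContDiffOn ℝ 1 (fun x => Nf x / D x) U :=
      (h1.contDiffOn).div (h2.contDiffOn) (fun x hx => hx.1.ne')
    exact h3.congr (fun x _ => hfD x)
  have hgC1 : ContDiffOn ℝ 1 g U := by
    have h1 : ContDiff ℝ 1 Ng := by
      simp only [hNg]; fun_prop
    have h2 : ContDiff ℝ 1 D := by
      simp only [hD]; fun_prop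
    have h3 : ContDiffOn ℝ 1 (fun x => Ng x / D x) U :=
      (h1.contDiffOn).div (h2.contDiffOn) (fun x hx => hx.1.ne')
    exact h3.congr (fun x _ => hgD x)
  have hfdiff : ∀ x ∈ R, DifferentiableAt ℝ f x := fun x hx =>
    ((hfC1.differentiableOn one_ne_zero).differentiableAt (hUopen.mem_nhds (hRU hx)))
  have hgdiff : ∀ x ∈ R, DifferentiableAt ℝ g x := fun x hx =>
    ((hgC1.differentiableOn one_ne_zero).differentiableAt (hUopen.mem_nhds (hRU hx)))
  have hdfc : ContinuousOn (deriv f) R :=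
    (hfC1.continuousOn_deriv_of_isOpen hUopen le_rfl).mono hRU
  have hdgc : ContinuousOn (deriv g) R :=
    (hgC1.continuousOn_deriv_of_isOpen hUopen le_rfl).mono hRU
  obtain ⟨Cf, hCf⟩ := (hRcompact.image_of_continuousOn hdfc).exists_bound_of_continuousOn
    continuousOn_id
  obtain ⟨Cg2, hCg2⟩ := (hRcompact.image_of_continuousOn hdgc).exists_bound_of_continuousOn
    continuousOn_id
  have hCf' : ∀ x ∈ R, ‖deriv f x‖ ≤ Cf := fun x hx => hCf _ ⟨x, hx, rfl⟩
  have hCg2' : ∀ x ∈ R, ‖deriv g x‖ ≤ Cg2 := fun x hx => hCg2 _ ⟨x, hx, rfl⟩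
  have h0R : (0:ℝ) ∈ R := hIccR ⟨le_rfl, hθpos.le⟩
  have hCf0 : 0 ≤ Cf := le_trans (norm_nonneg _) (hCf' 0 h0R)
  have hCg20 : 0 ≤ Cg2 := le_trans (norm_nonneg _) (hCg2' 0 h0R)
  have hLipf : ∀ x ∈ R, ∀ y ∈ R, |f x - f y| ≤ Cf * |x - y| := by
    intro x hx y hy
    have := Convex.norm_image_sub_le_of_norm_deriv_le hfdiff hCf' hRconv hy hx
    simpa [Real.norm_eq_abs] using this
  have hLipg : ∀ x ∈ R, ∀ y ∈ R, |g x - g y| ≤ Cg2 * |x - y| := by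
    intro x hx y hy
    have := Convex.norm_image_sub_le_of_norm_deriv_le hgdiff hCg2' hRconv hy hx
    simpa [Real.norm_eq_abs] using this
  set L : ℝ := Cf + M * Cg2 with hLdef
  have hL0 : 0 ≤ L := by positivity
  have hlip : ∀ t ∈ Set.Icc (0:ℝ) T, ∀ x ∈ R, ∀ y ∈ R,
      |(f x + u t * g x) - (f y + u t * g y)| ≤ L * |x - y| := by
    intro t _ x hx y hy
    have h1 : |f x - f y| ≤ Cf * |x - y| := hLipf x hx y hy
    have h2 : |g x - g y| ≤ Cg2 * |x - y| := hLipg x hx y hy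
    have h3 : |(f x + u t * g x) - (f y + u t * g y)| ≤
        |f x - f y| + |u t| * |g x - g y| := by
      have : (f x + u t * g x) - (f y + u t * g y) =
          (f x - f y) + u t * (g x - g y) := by ring
      rw [this]
      calc |(f x - f y) + u t * (g x - g y)| ≤ |f x - f y| + |u t * (g x - g y)| :=
            abs_add_le _ _
        _ = |f x - f y| + |u t| * |g x - g y| := by rw [abs_mul]
    have h4 : |u t| ≤ M := by
      rw [abs_of_nonneg (hubd t).1]; exact (hubd t).2
    have h5 : |u t| * |g x - g y| ≤ M * (Cg2 * |x - y|) := by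
      apply mul_le_mul h4 h2 (abs_nonneg _) hM0.le
    calc |(f x + u t * g x) - (f y + u t * g y)| ≤ |f x - f y| + |u t| * |g x - g y| := h3
      _ ≤ Cf * |x - y| + M * (Cg2 * |x - y|) := add_le_add h1 h5
      _ = L * |x - y| := by rw [hLdef]; ring
  -- bound of g on R
  obtain ⟨CgR, hCgR⟩ := (hRcompact.image_of_continuousOn
    (hgc.mono hRU)).exists_bound_of_continuousOn continuousOn_id
  have hCgR' : ∀ x ∈ R, ‖g x‖ ≤ CgR := fun x hx => hCgR _ ⟨x, hx, rfl⟩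
  -- ## conclusion
  constructor
  · rintro p ⟨humeas', hubd', hpcont, hp0, hpint⟩
    have hq0 : q 0 = 0 := hq1 0 hξ0
    have hqRsub : ∀ t ∈ Set.Icc (0:ℝ) T, Set.Icc (q t - δ0) (q t + δ0) ⊆ R := by
      intro t _ x hx
      have := hqmem t
      exact ⟨by linarith [hx.1, this.1], by linarith [hx.2, this.2]⟩
    have hpeq : ∀ t ∈ Set.Icc (0:ℝ) T, p t = p 0 + ∫ s in (0:ℝ)..t,
        (f (p s) + u s * g (p s)) := by
      intro t ht
      rw [hp0, zero_add]
      exact hpint t ht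
    have hqeq : ∀ t ∈ Set.Icc (0:ℝ) T, q t = q 0 + ∫ s in (0:ℝ)..t,
        (f (q s) + u s * g (q s)) := by
      intro t ht
      rw [hq0, zero_add]
      exact hqeqI t ht
    have hpii : ∀ c t, (0:ℝ) ≤ c → c ≤ t → t ≤ T → (∀ s ∈ Set.Icc c t, p s ∈ R) →
        IntervalIntegrable (fun s => f (p s) + u s * g (p s)) volume c t := by
      intro c t hc hct htT hmem
      have hsub : Set.Icc c t ⊆ Set.Icc (0:ℝ) T := Set.Icc_subset_Icc hc htT
      have hpc : ContinuousOn p (Set.Icc c t) := hpcont.mono hsub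
      have hfpc : ContinuousOn (fun s => f (p s)) (Set.Icc c t) :=
        hfc.comp hpc (fun s hs => hRU (hmem s hs))
      have hgpc : ContinuousOn (fun s => g (p s)) (Set.Icc c t) :=
        hgc.comp hpc (fun s hs => hRU (hmem s hs))
      apply IntervalIntegrable.add
      · exact hfpc.intervalIntegrable_of_Icc hct
      · rw [intervalIntegrable_iff_integrableOn_Ioc_of_le hct]
        haveI : IsFiniteMeasure (volume.restrict (Set.Ioc c t)) := by
          constructor
          rw [Measure.restrict_apply_univ]
          exact measure_Ioc_lt_top
        apply MeasureTheory.Integrable.mono' (integrable_const (M * CgR))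
        · exact (humeas'.aestronglyMeasurable.restrict).mul
            ((hgpc.aestronglyMeasurable measurableSet_Icc).mono_measure
              (Measure.restrict_mono Set.Ioc_subset_Icc_self le_rfl))
        · rw [ae_restrict_iff' measurableSet_Ioc]
          apply Filter.Eventually.of_forall
          intro s hs
          rw [norm_mul]
          have h1 : ‖u s‖ ≤ M := by
            rw [Real.norm_eq_abs, abs_of_nonneg (hubd s).1]; exact (hubd s).2
          have h2 : ‖g (p s)‖ ≤ CgR := hCgR' _ (hmem s (Set.Ioc_subset_Icc_self hs))
          exact mul_le_mul h1 h2 (norm_nonneg _) hM0.le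
    have hqii : ∀ c t, (0:ℝ) ≤ c → c ≤ t → t ≤ T →
        IntervalIntegrable (fun s => f (q s) + u s * g (q s)) volume c t := by
      intro c t _ _ _
      exact hwii c t
    have heqon := ode_unique (v := fun s x => f x + u s * g x)
      hT0 hL0 hδ0pos hpcont (hqcont.continuousOn) (by rw [hp0, hq0]) hqRsub hlip
      hpeq hqeq hpii hqii
    have hTeq : p T = q T := heqon ⟨hT0, le_rfl⟩
    rw [hTeq, hq3 T hξT]
  · -- the cost
    have hsubIoc : Set.Ioo ξ (ξ + Tstar) ⊆ Set.Ioc 0 T := fun s hs =>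
      ⟨lt_of_le_of_lt hξ0 hs.1, le_trans hs.2.le hξT⟩
    rw [intervalIntegral.integral_of_le hT0, hu,
      MeasureTheory.setIntegral_indicator measurableSet_Ioo,
      Set.inter_eq_self_of_subset_right hsubIoc, MeasureTheory.setIntegral_const,
      Real.volume_real_Ioo_of_le (by linarith), add_sub_cancel_left,
      smul_eq_mul, mul_comm]
end

section
/- (Optimality part of Theorem 1.) Assume M > m* and T ≥ T*. Every measurable control u : [0,T] → [0,M] whose associated state p_u satisfies p_u(T) = θ has total cost ∫₀^T u(t) dt ≥ M·T*. Consequently the minimal value of ∫₀^T u over admissible controls reaching θ at time T equals M·T*. -/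
open MeasureTheory intervalIntegral Set


lemma key_cov (T : ℝ) (hT : 0 ≤ T) (h ψ : ℝ → ℝ)
    (hint : IntervalIntegrable h volume 0 T) (hψ : Continuous ψ) :
    ∫ s in (0:ℝ)..T, h s * ψ (∫ x in (0:ℝ)..s, h x)
      = ∫ x in (0:ℝ)..(∫ x in (0:ℝ)..T, h x), ψ x := by
  set P : ℝ → ℝ := fun t => ∫ x in (0:ℝ)..t, h x with hPdef
  have hPcont : ContinuousOn P (Icc 0 T) := by
    have : IntegrableOn h (uIcc 0 T) volume := by
      rwa [uIcc_of_le hT, ← intervalIntegrable_iff_integrableOn_Icc_of_le hT]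
    simpa [hPdef, uIcc_of_le hT] using intervalIntegral.continuousOn_primitive_interval this
  obtain ⟨R0, hR0⟩ := isCompact_Icc.exists_bound_of_continuousOn hPcont
  set R : ℝ := max R0 0 with hRdef
  have hR : ∀ t ∈ Icc (0:ℝ) T, |P t| ≤ R := fun t ht => (hR0 t ht).trans (le_max_left _ _)
  have hRnn : (0:ℝ) ≤ R := le_max_right _ _
  obtain ⟨K0, hK0⟩ := isCompact_Icc.exists_bound_of_continuousOn
    (hψ.continuousOn (s := Icc (-(R+1)) (R+1)))
  set K : ℝ := max K0 0 with hKdef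
  have hK : ∀ x ∈ Icc (-(R+1)) (R+1), |ψ x| ≤ K := fun x hx => (hK0 x hx).trans (le_max_left _ _)
  have hKnn : (0:ℝ) ≤ K := le_max_right _ _
  have hψu := isCompact_Icc.uniformContinuousOn_of_continuous
    (hψ.continuousOn (s := Icc (-(R+1)) (R+1)))
  rw [Metric.uniformContinuousOn_iff] at hψu
  set Ih : ℝ := ∫ s in (0:ℝ)..T, |h s| with hIhdef
  have hIhnn : 0 ≤ Ih := intervalIntegral.integral_nonneg hT (fun u _ => abs_nonneg _)
  set F : ℝ → ℝ := fun x => ∫ y in (0:ℝ)..x, ψ y with hFdef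
  have hFd : ∀ x, HasDerivAt F (ψ x) x := fun x =>
    intervalIntegral.integral_hasDerivAt_right (hψ.intervalIntegrable _ _)
      (hψ.stronglyMeasurableAtFilter _ _) hψ.continuousAt
  have hmain : ∀ ε > (0:ℝ),
      |(∫ s in (0:ℝ)..T, h s * ψ (P s)) - F (P T)| ≤ ε := by
    intro ε hε
    set ε₂ : ℝ := ε / (2 * (Ih + 1)) with hε₂def
    have hε₂ : 0 < ε₂ := by positivity
    obtain ⟨δ₁, hδ₁, hδ⟩ := hψu ε₂ hε₂
    set ε' : ℝ := min (min 1 (δ₁/2)) (ε/(4*(K+1))) with hε'def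
    have hε' : 0 < ε' := by positivity
    have hε'1 : ε' ≤ 1 := (min_le_left _ _).trans (min_le_left _ _)
    have hε'δ : ε' ≤ δ₁/2 := (min_le_left _ _).trans (min_le_right _ _)
    have hε'ε : ε' ≤ ε/(4*(K+1)) := min_le_right _ _
    set hh : ℝ → ℝ := (Ioc (0:ℝ) T).indicator h with hhdef
    have hhh : Integrable hh volume := (integrable_indicator_iff measurableSet_Ioc).2 hint.1
    obtain ⟨v, -, hv1, hvc, hvint⟩ := hhh.exists_hasCompactSupport_integral_sub_le hε'
    set Pv : ℝ → ℝ := fun t => ∫ x in (0:ℝ)..t, v x with hPvdef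
    have hPvd : ∀ t, HasDerivAt Pv (v t) t := fun t =>
      intervalIntegral.integral_hasDerivAt_right (hvc.intervalIntegrable _ _)
        (hvc.stronglyMeasurableAtFilter _ _) hvc.continuousAt
    have hPvcont : Continuous Pv := by
      rw [continuous_iff_continuousAt]; exact fun t => (hPvd t).continuousAt
    have hL1 : ∀ t ∈ Icc (0:ℝ) T, (∫ s in (0:ℝ)..t, |h s - v s|) ≤ ε' := by
      intro t ht
      have h1 : (∫ s in (0:ℝ)..t, |h s - v s|) = ∫ s in Ioc (0:ℝ) t, |h s - v s| :=
        intervalIntegral.integral_of_le ht.1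
      have h2 : (∫ s in Ioc (0:ℝ) t, |h s - v s|) = ∫ s in Ioc (0:ℝ) t, ‖hh s - v s‖ := by
        refine setIntegral_congr_fun measurableSet_Ioc (fun s hs => ?_)
        have hind : hh s = h s := indicator_of_mem (Ioc_subset_Ioc_right ht.2 hs) h
        rw [hind, Real.norm_eq_abs]
      have h3 : (∫ s in Ioc (0:ℝ) t, ‖hh s - v s‖) ≤ ∫ s, ‖hh s - v s‖ :=
        setIntegral_le_integral (hhh.sub hvint).norm
          (Filter.Eventually.of_forall fun x => norm_nonneg _)
      linarith [hv1]
    have hclose : ∀ t ∈ Icc (0:ℝ) T, |P t - Pv t| ≤ ε' := by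
      intro t ht
      have hsub : P t - Pv t = ∫ s in (0:ℝ)..t, (h s - v s) := by
        rw [intervalIntegral.integral_sub
          (hint.mono_set (by rw [uIcc_of_le ht.1, uIcc_of_le hT]; exact Icc_subset_Icc le_rfl ht.2))
          (hvc.intervalIntegrable _ _)]
      rw [hsub]
      exact (intervalIntegral.abs_integral_le_integral_abs ht.1).trans (hL1 t ht)
    have hTT : T ∈ Icc (0:ℝ) T := ⟨hT, le_rfl⟩
    have hPbox : ∀ t ∈ Icc (0:ℝ) T, P t ∈ Icc (-(R+1)) (R+1) := by
      intro t ht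
      have h1 := abs_le.mp (hR t ht)
      rw [mem_Icc]; constructor <;> linarith [h1.1, h1.2]
    have hPvbox : ∀ t ∈ Icc (0:ℝ) T, Pv t ∈ Icc (-(R+1)) (R+1) := by
      intro t ht
      have h1 := abs_le.mp (hR t ht); have h2 := abs_le.mp (hclose t ht)
      rw [mem_Icc]; constructor <;> linarith [h1.1, h1.2, h2.1, h2.2, hε'1]
    have hSi : IntervalIntegrable (fun s => ψ (Pv s) * v s) volume 0 T :=
      ((hψ.comp hPvcont).mul hvc).intervalIntegrable _ _
    have hsmooth : (∫ s in (0:ℝ)..T, ψ (Pv s) * v s) = F (Pv T) - F (Pv 0) := by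
      have hd : ∀ x ∈ uIcc (0:ℝ) T, HasDerivAt (F ∘ Pv) (ψ (Pv x) * v x) x :=
        fun x _ => (hFd (Pv x)).comp x (hPvd x)
      simpa using intervalIntegral.integral_eq_sub_of_hasDerivAt hd hSi
    have hAi : IntervalIntegrable (fun s => h s * ψ (P s)) volume 0 T :=
      hint.mul_continuousOn (by rw [uIcc_of_le hT]; exact hψ.comp_continuousOn hPcont)
    have hdiff : |(∫ s in (0:ℝ)..T, h s * ψ (P s)) - (∫ s in (0:ℝ)..T, ψ (Pv s) * v s)|
        ≤ K * ε' + ε₂ * Ih := by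
      have heq : (∫ s in (0:ℝ)..T, h s * ψ (P s)) - (∫ s in (0:ℝ)..T, ψ (Pv s) * v s)
          = ∫ s in (0:ℝ)..T, (h s * ψ (P s) - ψ (Pv s) * v s) :=
        (intervalIntegral.integral_sub hAi hSi).symm
      rw [heq]
      have hmaji : IntervalIntegrable (fun s => |h s - v s| * K + |h s| * ε₂) volume 0 T :=
        (((hint.sub (hvc.intervalIntegrable _ _)).abs.mul_const K)).add (hint.abs.mul_const ε₂)
      have hmono : (∫ s in (0:ℝ)..T, |h s * ψ (P s) - ψ (Pv s) * v s|)
          ≤ ∫ s in (0:ℝ)..T, (|h s - v s| * K + |h s| * ε₂) := by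
        refine intervalIntegral.integral_mono_on hT ((hAi.sub hSi).abs) hmaji (fun s hs => ?_)
        have hb1 : |ψ (Pv s)| ≤ K := hK _ (hPvbox s hs)
        have hb2 : |ψ (P s) - ψ (Pv s)| ≤ ε₂ := by
          have hdist : dist (P s) (Pv s) < δ₁ := by
            rw [Real.dist_eq]
            have := hclose s hs; linarith
          have hd2 := hδ (P s) (hPbox s hs) (Pv s) (hPvbox s hs) hdist
          rw [Real.dist_eq] at hd2; exact hd2.le
        calc |h s * ψ (P s) - ψ (Pv s) * v s|
            = |(h s - v s) * ψ (Pv s) + h s * (ψ (P s) - ψ (Pv s))| := by ring_nf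
          _ ≤ |(h s - v s) * ψ (Pv s)| + |h s * (ψ (P s) - ψ (Pv s))| := abs_add_le _ _
          _ ≤ |h s - v s| * K + |h s| * ε₂ := by
              rw [abs_mul, abs_mul]
              exact add_le_add (mul_le_mul_of_nonneg_left hb1 (abs_nonneg _))
                (mul_le_mul_of_nonneg_left hb2 (abs_nonneg _))
      have hsplit : (∫ s in (0:ℝ)..T, (|h s - v s| * K + |h s| * ε₂))
          = (∫ s in (0:ℝ)..T, |h s - v s|) * K + Ih * ε₂ := by
        rw [intervalIntegral.integral_add ((hint.sub (hvc.intervalIntegrable _ _)).abs.mul_const K)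
          (hint.abs.mul_const ε₂), intervalIntegral.integral_mul_const,
          intervalIntegral.integral_mul_const]
      have habs := intervalIntegral.abs_integral_le_integral_abs
        (f := fun s => h s * ψ (P s) - ψ (Pv s) * v s) (μ := volume) hT
      have hL1T := hL1 T hTT
      have : (∫ s in (0:ℝ)..T, |h s - v s|) * K ≤ ε' * K :=
        mul_le_mul_of_nonneg_right hL1T hKnn
      rw [hsplit] at hmono
      linarith [habs, hmono, this]
    have hF2 : |F (Pv T) - F (P T)| ≤ K * ε' := by
      have he : F (Pv T) - F (P T) = ∫ x in (P T)..(Pv T), ψ x :=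
        intervalIntegral.integral_interval_sub_left (hψ.intervalIntegrable _ _)
          (hψ.intervalIntegrable _ _)
      rw [he]
      have hsubbox : Set.uIoc (P T) (Pv T) ⊆ Icc (-(R+1)) (R+1) :=
        (Ioc_subset_Icc_self).trans (uIcc_subset_Icc (hPbox T hTT) (hPvbox T hTT))
      have hb : ∀ x ∈ Set.uIoc (P T) (Pv T), ‖ψ x‖ ≤ K := by
        intro x hx; rw [Real.norm_eq_abs]; exact hK x (hsubbox hx)
      have hnorm := intervalIntegral.norm_integral_le_of_norm_le_const hb
      rw [Real.norm_eq_abs] at hnorm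
      have hd : |Pv T - P T| ≤ ε' := by rw [abs_sub_comm]; exact hclose T hTT
      exact hnorm.trans (mul_le_mul_of_nonneg_left hd hKnn)
    have hPv0 : Pv 0 = 0 := intervalIntegral.integral_same
    have hF0 : F (Pv 0) = 0 := by rw [hPv0]; exact intervalIntegral.integral_same
    have hABeq : (∫ s in (0:ℝ)..T, h s * ψ (P s)) - F (P T)
        = ((∫ s in (0:ℝ)..T, h s * ψ (P s)) - (∫ s in (0:ℝ)..T, ψ (Pv s) * v s))
          + (F (Pv T) - F (P T)) := by
      rw [hsmooth, hF0]; ring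
    rw [hABeq]
    calc |((∫ s in (0:ℝ)..T, h s * ψ (P s)) - (∫ s in (0:ℝ)..T, ψ (Pv s) * v s))
          + (F (Pv T) - F (P T))|
        ≤ |(∫ s in (0:ℝ)..T, h s * ψ (P s)) - (∫ s in (0:ℝ)..T, ψ (Pv s) * v s)|
          + |F (Pv T) - F (P T)| := abs_add_le _ _
      _ ≤ (K * ε' + ε₂ * Ih) + K * ε' := add_le_add hdiff hF2
      _ ≤ ε := by
          have h1 : ε' * (4*(K+1)) ≤ ε := by
            have h40 : (0:ℝ) < 4*(K+1) := by positivity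
            calc ε' * (4*(K+1)) ≤ (ε/(4*(K+1))) * (4*(K+1)) :=
                  mul_le_mul_of_nonneg_right hε'ε h40.le
              _ = ε := div_mul_cancel₀ _ h40.ne'
          have h2 : ε₂ * (2*(Ih+1)) = ε := div_mul_cancel₀ _ (by positivity)
          nlinarith [hε'.le, hε₂.le, hKnn, hIhnn]
  have hzero : |(∫ s in (0:ℝ)..T, h s * ψ (P s)) - F (P T)| = 0 := by
    by_contra hne
    have hpos : 0 < |(∫ s in (0:ℝ)..T, h s * ψ (P s)) - F (P T)| :=
      lt_of_le_of_ne (abs_nonneg _) (Ne.symm hne)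
    have := hmain (|(∫ s in (0:ℝ)..T, h s * ψ (P s)) - F (P T)|/2) (by linarith)
    linarith
  have := sub_eq_zero.mp (abs_eq_zero.mp hzero)
  exact this

lemma invariance (T θ δ : ℝ) (hδ : 0 < δ) (hθpos : 0 < θ) (hT : 0 ≤ T)
    (p h : ℝ → ℝ)
    (hpc : ContinuousOn p (Icc 0 T)) (hp0 : p 0 = 0) (hpT : p T = θ)
    (hint : IntervalIntegrable h volume 0 T)
    (hp : ∀ t ∈ Icc (0:ℝ) T, p t = ∫ s in (0:ℝ)..t, h s)
    (hlow : ∀ s ∈ Icc (0:ℝ) T, -δ < p s → p s < 0 → 0 ≤ h s)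
    (hup : ∀ s ∈ Icc (0:ℝ) T, θ < p s → p s < θ + δ → 0 ≤ h s) :
    ∀ t ∈ Icc (0:ℝ) T, p t ∈ Icc 0 θ := by
  have hsub : ∀ a ∈ Icc (0:ℝ) T, IntervalIntegrable h volume 0 a := fun a ha =>
    hint.mono_set (by rw [uIcc_of_le ha.1, uIcc_of_le hT]; exact Icc_subset_Icc le_rfl ha.2)
  have hstep : ∀ a b : ℝ, a ∈ Icc (0:ℝ) T → b ∈ Icc (0:ℝ) T →
      p b - p a = ∫ s in a..b, h s := by
    intro a b ha hb
    rw [hp a ha, hp b hb]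
    exact intervalIntegral.integral_interval_sub_left (hsub b hb) (hsub a ha)
  have hane : ∀ c : ℝ, ∀ᵐ s : ℝ, s ≠ c := by
    intro c
    have := measure_eq_zero_iff_ae_notMem.mp (measure_singleton c (μ := volume))
    simpa using this
  have hmono : ∀ a b : ℝ, a ∈ Icc (0:ℝ) T → b ∈ Icc (0:ℝ) T → a ≤ b →
      (∀ s ∈ Ioo a b, 0 ≤ h s) → p a ≤ p b := by
    intro a b ha hb hab hsgn
    have hnn : 0 ≤ ∫ s in a..b, h s := by
      refine intervalIntegral.integral_nonneg_of_ae_restrict hab ?_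
      rw [Filter.EventuallyLE, ae_restrict_iff' measurableSet_Icc]
      filter_upwards [hane a, hane b] with s hsa hsb hs
      exact hsgn s ⟨lt_of_le_of_ne hs.1 (Ne.symm hsa), lt_of_le_of_ne hs.2 hsb⟩
    have := hstep a b ha hb
    linarith
  have hclosedS : ∀ c : ℝ, IsClosed {t | t ∈ Icc (0:ℝ) T ∧ p t ≤ c} := by
    intro c
    have := hpc.preimage_isClosed_of_isClosed isClosed_Icc (isClosed_Iic (a := c))
    simpa [Set.inter_def, Set.preimage] using this
  have hclosedS' : ∀ c : ℝ, IsClosed {t | t ∈ Icc (0:ℝ) T ∧ c ≤ p t} := by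
    intro c
    have := hpc.preimage_isClosed_of_isClosed isClosed_Icc (isClosed_Ici (a := c))
    simpa [Set.inter_def, Set.preimage] using this
  -- Claim A : p stays above -δ
  have claimA : ∀ t ∈ Icc (0:ℝ) T, -δ < p t := by
    by_contra hcon
    push_neg at hcon
    obtain ⟨t₀, ht₀, ht₀le⟩ := hcon
    set S : Set ℝ := {t | t ∈ Icc (0:ℝ) T ∧ p t ≤ -δ} with hSdef
    have hSne : S.Nonempty := ⟨t₀, ht₀, ht₀le⟩
    have hSbdd : BddBelow S := ⟨0, fun x hx => hx.1.1⟩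
    set τ := sInf S with hτdef
    have hτS : τ ∈ S := (hclosedS (-δ)).csInf_mem hSne hSbdd
    have hτpos : 0 < τ := by
      rcases lt_or_eq_of_le hτS.1.1 with h' | h'
      · exact h'
      · exfalso; have h2 := hτS.2; rw [← h', hp0] at h2; linarith
    set S₃ : Set ℝ := {t | t ∈ Icc (0:ℝ) τ ∧ 0 ≤ p t} with hS₃def
    have hτT : τ ≤ T := hτS.1.2
    have hS₃closed : IsClosed S₃ := by
      have := (hpc.mono (Icc_subset_Icc le_rfl hτT)).preimage_isClosed_of_isClosed
        isClosed_Icc (isClosed_Ici (a := (0:ℝ)))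
      simpa [Set.inter_def, Set.preimage, hS₃def] using this
    have hS₃ne : S₃.Nonempty := ⟨0, ⟨le_rfl, hτpos.le⟩, by rw [hp0]⟩
    have hS₃bdd : BddAbove S₃ := ⟨τ, fun x hx => hx.1.2⟩
    set t₃ := sSup S₃ with ht₃def
    have ht₃S : t₃ ∈ S₃ := hS₃closed.csSup_mem hS₃ne hS₃bdd
    have ht₃lt : t₃ < τ := by
      rcases lt_or_eq_of_le ht₃S.1.2 with h' | h'
      · exact h'
      · exfalso; have h2 := ht₃S.2; rw [h'] at h2; linarith [hτS.2, hδ]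
    have ht₃Icc : t₃ ∈ Icc (0:ℝ) T := ⟨ht₃S.1.1, ht₃S.1.2.trans hτT⟩
    have hsgn : ∀ s ∈ Ioo t₃ τ, 0 ≤ h s := by
      intro s hs
      have hsIcc : s ∈ Icc (0:ℝ) T := ⟨ht₃S.1.1.trans hs.1.le, hs.2.le.trans hτT⟩
      have h1 : -δ < p s := by
        by_contra hc
        push_neg at hc
        exact absurd (csInf_le hSbdd ⟨hsIcc, hc⟩) (not_le.mpr hs.2)
      have h2 : p s < 0 := by
        by_contra hc
        push_neg at hc
        exact absurd (le_csSup hS₃bdd ⟨⟨ht₃S.1.1.trans hs.1.le, hs.2.le⟩, hc⟩)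
          (not_le.mpr hs.1)
      exact hlow s hsIcc h1 h2
    have := hmono t₃ τ ht₃Icc hτS.1 ht₃lt.le hsgn
    linarith [ht₃S.2, hτS.2, hδ]
  -- Claim B : p stays nonnegative
  have claimB : ∀ t ∈ Icc (0:ℝ) T, 0 ≤ p t := by
    by_contra hcon
    push_neg at hcon
    obtain ⟨t₀, ht₀, ht₀lt⟩ := hcon
    set S₃ : Set ℝ := {t | t ∈ Icc (0:ℝ) t₀ ∧ 0 ≤ p t} with hS₃def
    have ht₀T : t₀ ≤ T := ht₀.2
    have hS₃closed : IsClosed S₃ := by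
      have := (hpc.mono (Icc_subset_Icc le_rfl ht₀T)).preimage_isClosed_of_isClosed
        isClosed_Icc (isClosed_Ici (a := (0:ℝ)))
      simpa [Set.inter_def, Set.preimage, hS₃def] using this
    have hS₃ne : S₃.Nonempty := ⟨0, ⟨le_rfl, ht₀.1⟩, by rw [hp0]⟩
    have hS₃bdd : BddAbove S₃ := ⟨t₀, fun x hx => hx.1.2⟩
    set t₃ := sSup S₃ with ht₃def
    have ht₃S : t₃ ∈ S₃ := hS₃closed.csSup_mem hS₃ne hS₃bdd
    have ht₃lt : t₃ < t₀ := by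
      rcases lt_or_eq_of_le ht₃S.1.2 with h' | h'
      · exact h'
      · exfalso; have h2 := ht₃S.2; rw [h'] at h2; linarith
    have ht₃Icc : t₃ ∈ Icc (0:ℝ) T := ⟨ht₃S.1.1, ht₃S.1.2.trans ht₀T⟩
    have hsgn : ∀ s ∈ Ioo t₃ t₀, 0 ≤ h s := by
      intro s hs
      have hsIcc : s ∈ Icc (0:ℝ) T := ⟨ht₃S.1.1.trans hs.1.le, hs.2.le.trans ht₀T⟩
      have h2 : p s < 0 := by
        by_contra hc
        push_neg at hc
        exact absurd (le_csSup hS₃bdd ⟨⟨ht₃S.1.1.trans hs.1.le, hs.2.le⟩, hc⟩)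
          (not_le.mpr hs.1)
      exact hlow s hsIcc (claimA s hsIcc) h2
    have := hmono t₃ t₀ ht₃Icc ht₀ ht₃lt.le hsgn
    linarith [ht₃S.2]
  -- Claim C : p stays below θ
  have claimC : ∀ t ∈ Icc (0:ℝ) T, p t ≤ θ := by
    by_contra hcon
    push_neg at hcon
    obtain ⟨t₀, ht₀, ht₀gt⟩ := hcon
    set y : ℝ := min ((θ + p t₀)/2) (θ + δ/2) with hydef
    have hyθ : θ < y := lt_min (by linarith) (by linarith)
    have hyp : y ≤ p t₀ := (min_le_left _ _).trans (by linarith)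
    have hyδ : y < θ + δ := (min_le_right _ _).trans_lt (by linarith)
    set S₂ : Set ℝ := {t | t ∈ Icc (0:ℝ) T ∧ y ≤ p t} with hS₂def
    have hS₂closed : IsClosed S₂ := hclosedS' y
    have hS₂ne : S₂.Nonempty := ⟨t₀, ht₀, hyp⟩
    have hS₂bdd : BddAbove S₂ := ⟨T, fun x hx => hx.1.2⟩
    set t₂ := sSup S₂ with ht₂def
    have ht₂S : t₂ ∈ S₂ := hS₂closed.csSup_mem hS₂ne hS₂bdd
    set S₄ : Set ℝ := {t | t ∈ Icc t₂ T ∧ p t ≤ θ} with hS₄def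
    have hS₄closed : IsClosed S₄ := by
      have := (hpc.mono (Icc_subset_Icc ht₂S.1.1 le_rfl)).preimage_isClosed_of_isClosed
        isClosed_Icc (isClosed_Iic (a := θ))
      simpa [Set.inter_def, Set.preimage, hS₄def] using this
    have hS₄ne : S₄.Nonempty := ⟨T, ⟨ht₂S.1.2, le_rfl⟩, le_of_eq hpT⟩
    have hS₄bdd : BddBelow S₄ := ⟨t₂, fun x hx => hx.1.1⟩
    set t₄ := sInf S₄ with ht₄def
    have ht₄S : t₄ ∈ S₄ := hS₄closed.csInf_mem hS₄ne hS₄bdd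
    have ht₂Icc : t₂ ∈ Icc (0:ℝ) T := ht₂S.1
    have ht₄Icc : t₄ ∈ Icc (0:ℝ) T := ⟨ht₂S.1.1.trans ht₄S.1.1, ht₄S.1.2⟩
    have ht₂₄ : t₂ < t₄ := by
      rcases lt_or_eq_of_le ht₄S.1.1 with h' | h'
      · exact h'
      · exfalso; have h2 := ht₂S.2; rw [h'] at h2; linarith [ht₄S.2, hyθ]
    have hsgn : ∀ s ∈ Ioo t₂ t₄, 0 ≤ h s := by
      intro s hs
      have hsIcc : s ∈ Icc (0:ℝ) T := ⟨ht₂S.1.1.trans hs.1.le, hs.2.le.trans ht₄S.1.2⟩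
      have h1 : p s < y := by
        by_contra hc
        push_neg at hc
        exact absurd (le_csSup hS₂bdd ⟨hsIcc, hc⟩) (not_le.mpr hs.1)
      have h2 : θ < p s := by
        by_contra hc
        push_neg at hc
        exact absurd (csInf_le hS₄bdd ⟨⟨hs.1.le, hsIcc.2⟩, hc⟩) (not_le.mpr hs.2)
      exact hup s hsIcc h2 (h1.trans hyδ)
    have := hmono t₂ t₄ ht₂Icc ht₄Icc ht₂₄.le hsgn
    linarith [ht₂S.2, ht₄S.2]
  exact fun t ht => ⟨claimB t ht, claimC t ht⟩

lemma construction (θ Tstar T M c C : ℝ) (f g φ : ℝ → ℝ)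
    (hφc : Continuous φ) (hc : 0 < c) (hφ1 : ∀ x, c ≤ φ x) (hφ2 : ∀ x, φ x ≤ C)
    (hθ : 0 ≤ θ) (hM : 0 < M) (hTT : Tstar ≤ T)
    (hTstar : Tstar = ∫ x in (0:ℝ)..θ, (φ x)⁻¹)
    (hfg : ∀ x ∈ Icc (0:ℝ) θ, f x + M * g x = φ x) (hfθ : f θ = 0) :
    ∃ u p : ℝ → ℝ,
      (Measurable u ∧ (∀ t, u t ∈ Icc (0:ℝ) M) ∧ ContinuousOn p (Icc 0 T) ∧ p 0 = 0 ∧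
        ∀ t ∈ Icc (0:ℝ) T, p t = ∫ s in (0:ℝ)..t, (f (p s) + u s * g (p s))) ∧
      p T = θ ∧ (∫ t in (0:ℝ)..T, u t) = M * Tstar := by
  have hφpos : ∀ x, 0 < φ x := fun x => hc.trans_le (hφ1 x)
  have hC : 0 < C := hc.trans_le ((hφ1 0).trans (hφ2 0))
  set ψ : ℝ → ℝ := fun y => (φ y)⁻¹ with hψdef
  have hψc : Continuous ψ := hφc.inv₀ (fun x => (hφpos x).ne')
  have hψpos : ∀ x, 0 < ψ x := fun x => inv_pos.2 (hφpos x)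
  have hψlb : ∀ x, C⁻¹ ≤ ψ x := fun x => inv_anti₀ (hφpos x) (hφ2 x)
  set F : ℝ → ℝ := fun x => ∫ y in (0:ℝ)..x, ψ y with hFdef
  have hFd : ∀ x, HasDerivAt F (ψ x) x := fun x =>
    intervalIntegral.integral_hasDerivAt_right (hψc.intervalIntegrable _ _)
      (hψc.stronglyMeasurableAtFilter _ _) hψc.continuousAt
  have hFc : Continuous F := by
    rw [continuous_iff_continuousAt]; exact fun x => (hFd x).continuousAt
  have hFmono : StrictMono F := by
    refine strictMono_of_deriv_pos (fun x => ?_)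
    rw [(hFd x).deriv]; exact hψpos x
  have hF0 : F 0 = 0 := intervalIntegral.integral_same
  have hFlb : ∀ x : ℝ, 0 ≤ x → C⁻¹ * x ≤ F x := by
    intro x hx
    have h1 : (∫ y in (0:ℝ)..x, C⁻¹) ≤ ∫ y in (0:ℝ)..x, ψ y :=
      intervalIntegral.integral_mono_on hx (intervalIntegrable_const)
        (hψc.intervalIntegrable _ _) (fun y _ => hψlb y)
    simpa [mul_comm] using h1
  have hFub : ∀ x : ℝ, x ≤ 0 → F x ≤ C⁻¹ * x := by
    intro x hx
    have h1 : (∫ y in x..(0:ℝ), C⁻¹) ≤ ∫ y in x..(0:ℝ), ψ y :=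
      intervalIntegral.integral_mono_on hx (intervalIntegrable_const)
        (hψc.intervalIntegrable _ _) (fun y _ => hψlb y)
    have h2 : F x = - ∫ y in x..(0:ℝ), ψ y := intervalIntegral.integral_symm x 0
    rw [h2]
    have : (∫ y in x..(0:ℝ), C⁻¹) = C⁻¹ * (0 - x) := by simp [mul_comm]
    nlinarith [h1]
  have hFtop : Filter.Tendsto F Filter.atTop Filter.atTop := by
    refine Filter.tendsto_atTop_mono' Filter.atTop (f₁ := fun x => C⁻¹ * x) ?_ ?_
    · filter_upwards [Filter.eventually_ge_atTop (0:ℝ)] with x hx using hFlb x hx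
    · exact (Filter.tendsto_id (α := ℝ)).const_mul_atTop (inv_pos.2 hC)
  have hFbot : Filter.Tendsto F Filter.atBot Filter.atBot := by
    refine Filter.tendsto_atBot_mono' Filter.atBot (f₁ := fun x => C⁻¹ * x) ?_ ?_
    · filter_upwards [Filter.eventually_le_atBot (0:ℝ)] with x hx using hFub x hx
    · exact Filter.Tendsto.const_mul_atBot (inv_pos.2 hC) Filter.tendsto_id
  have hFsurj : Function.Surjective F := hFc.surjective hFtop hFbot
  set E : ℝ ≃o ℝ := hFmono.orderIsoOfSurjective F hFsurj with hEdef
  set q : ℝ → ℝ := fun t => E.symm t with hqdef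
  have hEapp : ∀ x, E x = F x := fun x => rfl
  have hqF : ∀ x, q (F x) = x := fun x => E.symm_apply_apply x
  have hFq : ∀ t, F (q t) = t := fun t => E.apply_symm_apply t
  have hqcont : Continuous q := E.symm.continuous
  have hqmono : Monotone q := E.symm.monotone
  have hqd : ∀ t, HasDerivAt q (φ (q t)) t := by
    intro t
    have hne : ψ (q t) ≠ 0 := (hψpos _).ne'
    have := HasDerivAt.of_local_left_inverse hqcont.continuousAt (hFd (q t)) hne
      (Filter.Eventually.of_forall hFq)
    simpa [hψdef, inv_inv] using this
  have hq0 : q 0 = 0 := by have := hqF 0; rwa [hF0] at this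
  have hFθ : F θ = Tstar := by rw [hTstar]
  have hqθ : q Tstar = θ := by have := hqF θ; rwa [hFθ] at this
  have hTstar0 : 0 ≤ Tstar := by
    have := hFmono.monotone hθ; rwa [hF0, hFθ] at this
  set p₀ : ℝ → ℝ := fun t => q (min t Tstar) with hp₀def
  set u₀ : ℝ → ℝ := (Iio Tstar).piecewise (fun _ => M) (fun _ => 0) with hu₀def
  have hu₀lt : ∀ s, s < Tstar → u₀ s = M := fun s hs => Set.piecewise_eq_of_mem _ _ _ hs
  have hu₀ge : ∀ s, Tstar ≤ s → u₀ s = 0 := fun s hs =>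
    Set.piecewise_eq_of_notMem _ _ _ (by simpa using hs)
  have hrange : ∀ s, 0 ≤ s → q (min s Tstar) ∈ Icc 0 θ := by
    intro s hs
    constructor
    · rw [← hq0]; exact hqmono (le_min hs hTstar0)
    · rw [← hqθ]; exact hqmono (min_le_right _ _)
  have hane : ∀ c0 : ℝ, ∀ᵐ s : ℝ, s ≠ c0 := by
    intro c0
    have := measure_eq_zero_iff_ae_notMem.mp (measure_singleton c0 (μ := volume))
    simpa using this
  set w : ℝ → ℝ := fun s => f (p₀ s) + u₀ s * g (p₀ s) with hwdef
  have hw_lt : ∀ s, 0 ≤ s → s < Tstar → w s = φ (q s) := by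
    intro s hs0 hs
    have hmin : min s Tstar = s := min_eq_left hs.le
    have hp₀s : p₀ s = q s := by rw [hp₀def]; simp [hmin]
    rw [hwdef]; simp only [hp₀s, hu₀lt s hs]
    exact hfg (q s) (by rw [← hmin]; exact hrange s hs0)
  have hw_ge : ∀ s, Tstar ≤ s → w s = 0 := by
    intro s hs
    have hmin : min s Tstar = Tstar := min_eq_right hs
    have hp₀s : p₀ s = θ := by rw [hp₀def]; simp [hmin, hqθ]
    rw [hwdef]; simp [hp₀s, hu₀ge s hs, hfθ]
  have hFTC : ∀ t, 0 ≤ t → t ≤ Tstar → (∫ s in (0:ℝ)..t, φ (q s)) = q t := by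
    intro t ht0 ht
    have := intervalIntegral.integral_eq_sub_of_hasDerivAt (f := q) (f' := fun s => φ (q s))
      (a := 0) (b := t) (fun x _ => hqd x) ((hφc.comp hqcont).intervalIntegrable _ _)
    rw [this, hq0, sub_zero]
  have hwint1 : IntervalIntegrable w volume 0 Tstar := by
    rw [intervalIntegrable_iff_integrableOn_Ioc_of_le hTstar0]
    refine (((hφc.comp hqcont).intervalIntegrable 0 Tstar).1).congr ?_
    filter_upwards [ae_restrict_of_ae (hane Tstar), ae_restrict_mem measurableSet_Ioc]
      with s hs1 hs2
    exact (hw_lt s hs2.1.le (lt_of_le_of_ne hs2.2 hs1)).symm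
  have hwint2 : ∀ t, Tstar ≤ t → IntervalIntegrable w volume Tstar t := by
    intro t ht
    rw [intervalIntegrable_iff_integrableOn_Ioc_of_le ht]
    exact (integrableOn_zero).congr_fun (fun s hs => (hw_ge s hs.1.le).symm) measurableSet_Ioc
  have hint1 : ∀ t, 0 ≤ t → t ≤ Tstar → (∫ s in (0:ℝ)..t, w s) = q t := by
    intro t ht0 ht
    have hcongr : (∫ s in (0:ℝ)..t, w s) = ∫ s in (0:ℝ)..t, φ (q s) := by
      refine intervalIntegral.integral_congr_ae ?_
      filter_upwards [hane Tstar] with s hs hmem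
      rw [uIoc_of_le ht0] at hmem
      exact hw_lt s hmem.1.le (lt_of_le_of_ne (hmem.2.trans ht) hs)
    rw [hcongr, hFTC t ht0 ht]
  have htraj : ∀ t ∈ Icc (0:ℝ) T, p₀ t = ∫ s in (0:ℝ)..t, w s := by
    intro t ht
    rcases le_or_gt t Tstar with hcase | hcase
    · rw [hint1 t ht.1 hcase, hp₀def]; simp [min_eq_left hcase]
    · have hsplit : (∫ s in (0:ℝ)..t, w s) = (∫ s in (0:ℝ)..Tstar, w s) + ∫ s in Tstar..t, w s :=
        (intervalIntegral.integral_add_adjacent_intervals hwint1 (hwint2 t hcase.le)).symm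
      have hz : (∫ s in Tstar..t, w s) = 0 := by
        have heq : EqOn w (fun _ => (0:ℝ)) (uIcc Tstar t) := fun s hs => by
          rw [uIcc_of_le hcase.le] at hs; exact hw_ge s hs.1
        rw [intervalIntegral.integral_congr heq]; simp
      rw [hsplit, hz, hint1 Tstar hTstar0 le_rfl, hqθ, add_zero, hp₀def]
      simp [min_eq_right hcase.le, hqθ]
  have hu₀m : Measurable u₀ :=
    Measurable.piecewise measurableSet_Iio measurable_const measurable_const
  have hu₀int1 : IntervalIntegrable u₀ volume 0 Tstar := by
    rw [intervalIntegrable_iff_integrableOn_Ioc_of_le hTstar0]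
    refine (integrableOn_const (C := M) measure_Ioc_lt_top.ne).congr ?_
    filter_upwards [ae_restrict_of_ae (hane Tstar), ae_restrict_mem measurableSet_Ioc]
      with s h1 h2
    exact (hu₀lt s (lt_of_le_of_ne h2.2 h1)).symm
  have hu₀int2 : IntervalIntegrable u₀ volume Tstar T := by
    rw [intervalIntegrable_iff_integrableOn_Ioc_of_le hTT]
    exact integrableOn_zero.congr_fun (fun s hs => (hu₀ge s hs.1.le).symm) measurableSet_Ioc
  have hcost : (∫ t in (0:ℝ)..T, u₀ t) = M * Tstar := by
    have hsplit := intervalIntegral.integral_add_adjacent_intervals hu₀int1 hu₀int2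
    have h1 : (∫ t in (0:ℝ)..Tstar, u₀ t) = M * Tstar := by
      have hc2 : (∫ t in (0:ℝ)..Tstar, u₀ t) = ∫ t in (0:ℝ)..Tstar, M := by
        refine intervalIntegral.integral_congr_ae ?_
        filter_upwards [hane Tstar] with s hs hmem
        rw [uIoc_of_le hTstar0] at hmem
        exact hu₀lt s (lt_of_le_of_ne hmem.2 hs)
      rw [hc2]; simp [mul_comm]
    have h2 : (∫ t in Tstar..T, u₀ t) = 0 := by
      have heq : EqOn u₀ (fun _ => (0:ℝ)) (uIcc Tstar T) := fun s hs => by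
        rw [uIcc_of_le hTT] at hs; exact hu₀ge s hs.1
      rw [intervalIntegral.integral_congr heq]; simp
    rw [← hsplit, h1, h2, add_zero]
  refine ⟨u₀, p₀, ⟨hu₀m, ?_, ?_, ?_, htraj⟩, ?_, hcost⟩
  · intro t
    rcases lt_or_ge t Tstar with hcase | hcase
    · rw [hu₀lt t hcase]; exact ⟨hM.le, le_rfl⟩
    · rw [hu₀ge t hcase]; exact ⟨le_rfl, hM.le⟩
  · exact (hqcont.comp (continuous_id.min continuous_const)).continuousOn
  · rw [hp₀def]; simp only [min_eq_left hTstar0]; exact hq0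
  · rw [hp₀def]; simp only [min_eq_right hTT]; exact hqθ




set_option maxHeartbeats 4000000 in
/-- optimality part of Theorem 1: for M > m* and T ≥ T*, every admissible
control steering the state to θ at time T has cost ∫₀^T u ≥ M·T*, and the minimal
cost over such controls equals M·T*. -/
theorem stmt_11
    (b1 b2 d1 d2 K sh : ℝ)
    (hb1 : 0 < b1) (hb2 : 0 < b2) (hd1 : 0 < d1) (hd2 : 0 < d2)
    (hK : 0 < K) (hsh0 : 0 < sh) (hsh1 : sh ≤ 1)
    (hlow : 1 - sh < d1 * b2 / (d2 * b1)) (hhigh : d1 * b2 / (d2 * b1) < 1)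
    (f g : ℝ → ℝ)
    (hf : ∀ p, f p = p * (1 - p) * (d1 * b2 - d2 * b1 * (1 - sh * p)) /
      (b1 * (1 - p) * (1 - sh * p) + b2 * p))
    (hg : ∀ p, g p = (1 / K) * (b1 * (1 - p) * (1 - sh * p)) /
      (b1 * (1 - p) * (1 - sh * p) + b2 * p))
    (θ : ℝ) (hθ : θ = (1 / sh) * (1 - d1 * b2 / (d2 * b1)))
    (mstar : ℝ)
    (hmstar : IsGreatest ((fun p => -f p / g p) '' Set.Icc 0 θ) mstar)
    (M : ℝ) (hM : mstar < M)
    (Tstar : ℝ) (hTstar : Tstar = ∫ ν in (0:ℝ)..θ, (f ν + M * g ν)⁻¹)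
    (T : ℝ) (hT : Tstar ≤ T) :
    (∀ u p : ℝ → ℝ, IsTrajectory f g T M u p → p T = θ →
        M * Tstar ≤ ∫ t in (0:ℝ)..T, u t) ∧
    IsLeast {c : ℝ | ∃ u p : ℝ → ℝ, IsTrajectory f g T M u p ∧ p T = θ ∧
        c = ∫ t in (0:ℝ)..T, u t} (M * Tstar) := by
  have hd2b1 : 0 < d2 * b1 := mul_pos hd2 hb1
  have hrpos : 0 < d1 * b2 / (d2 * b1) := by positivity
  have hθpos : 0 < θ := by
    rw [hθ]; have : 0 < 1 - d1 * b2 / (d2 * b1) := by linarith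
    positivity
  have hθlt1 : θ < 1 := by
    rw [hθ]
    rw [div_mul_eq_mul_div, div_lt_one hsh0, one_mul]
    linarith
  -- the bracket identity
  have hshθ : 1 - sh * θ = d1 * b2 / (d2 * b1) := by
    rw [hθ]; field_simp; ring
  have hbr : ∀ x : ℝ, d1 * b2 - d2 * b1 * (1 - sh * x) = d2 * b1 * sh * (x - θ) := by
    intro x
    have h1 : d1 * b2 = (1 - sh * θ) * (d2 * b1) := by
      rw [hshθ]; field_simp
    rw [h1]; ring
  -- the safety margin δ
  obtain ⟨δ, hδpos, hδb, hδ2⟩ :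
      ∃ δ : ℝ, 0 < δ ∧ δ ≤ b1/(2*b2) ∧ δ ≤ (1-θ)/2 :=
    ⟨min (b1/(2*b2)) ((1-θ)/2), lt_min (by positivity) (by linarith),
      min_le_left _ _, min_le_right _ _⟩
  have hδθ : θ + δ < 1 := by linarith
  -- denominator positivity on the extended domain
  have hD : ∀ x : ℝ, -δ ≤ x → x ≤ θ + δ → 0 < b1 * (1 - x) * (1 - sh * x) + b2 * x := by
    clear hf hg hmstar hTstar hθ hbr hshθ hT hrpos hhigh hlow
    intro x hx1 hx2
    have hxlt1 : x < 1 := lt_of_le_of_lt hx2 hδθ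
    rcases le_or_gt 0 x with hx0 | hx0
    · have hshx : sh * x ≤ x := by nlinarith
      have h2 : 0 < 1 - sh * x := by nlinarith
      nlinarith [mul_pos (mul_pos hb1 (by linarith : (0:ℝ) < 1 - x)) h2,
        mul_nonneg hb2.le hx0]
    · have h1 : (1:ℝ) < 1 - x := by linarith
      have h2 : (1:ℝ) < 1 - sh * x := by nlinarith
      have hp : (1:ℝ) < (1 - x) * (1 - sh * x) := by nlinarith
      have h3 : b1 ≤ b1 * (1 - x) * (1 - sh * x) := by nlinarith [mul_lt_mul_of_pos_left hp hb1]
      have h4 : b2 * δ ≤ b1 / 2 := by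
        have he : b2 * (b1/(2*b2)) = b1/2 := by field_simp
        linarith [mul_le_mul_of_nonneg_left hδb hb2.le, he]
      have h5 : b2 * (-x) ≤ b2 * δ := mul_le_mul_of_nonneg_left (neg_le.mpr hx1) hb2.le
      nlinarith [h3, h4, h5]
  -- positivity facts for 1-x and 1-sh*x
  have hfac : ∀ x : ℝ, x ≤ θ + δ → 0 < 1 - x ∧ 0 < 1 - sh * x := by
    clear hf hg hmstar hTstar hθ hbr hshθ hT hrpos hhigh hlow hD
    intro x hx2
    have hxlt1 : x < 1 := lt_of_le_of_lt hx2 hδθ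
    refine ⟨by linarith, ?_⟩
    rcases le_or_gt 0 x with hx0 | hx0
    · nlinarith
    · nlinarith
  -- g positive on extended domain
  have hgpos : ∀ x : ℝ, -δ ≤ x → x ≤ θ + δ → 0 < g x := by
    intro x hx1 hx2
    rw [hg]
    obtain ⟨h1, h2⟩ := hfac x hx2
    exact div_pos (by positivity) (hD x hx1 hx2)
  -- f sign facts
  have hfnum : ∀ x : ℝ, f x = x * (1 - x) * (d2 * b1 * sh * (x - θ)) /
      (b1 * (1 - x) * (1 - sh * x) + b2 * x) := by
    intro x; rw [hf, hbr]
  have hfnonpos : ∀ x : ℝ, 0 ≤ x → x ≤ θ → f x ≤ 0 := by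
    intro x hx0 hxθ
    rw [hfnum]
    have hD' := hD x (by linarith) (by linarith)
    obtain ⟨h1, h2⟩ := hfac x (by linarith)
    apply div_nonpos_of_nonpos_of_nonneg _ hD'.le
    have hxθ : x - θ ≤ 0 := by linarith
    exact mul_nonpos_iff.mpr (Or.inl ⟨mul_nonneg hx0 h1.le,
      mul_nonpos_iff.mpr (Or.inl ⟨by positivity, hxθ⟩)⟩)
  have hflow : ∀ x : ℝ, -δ ≤ x → x ≤ 0 → 0 ≤ f x := by
    intro x hx1 hx2
    rw [hfnum]
    have hD' := hD x hx1 (by linarith)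
    obtain ⟨h1, h2⟩ := hfac x (by linarith)
    apply div_nonneg _ hD'.le
    have hxθ : x - θ ≤ 0 := by linarith
    have hxn : x * (1 - x) ≤ 0 := mul_nonpos_iff.mpr (Or.inr ⟨hx2, h1.le⟩)
    have hcpos : (0:ℝ) ≤ d2 * b1 * sh := by positivity
    have hb : d2 * b1 * sh * (x - θ) ≤ 0 := mul_nonpos_iff.mpr (Or.inl ⟨hcpos, hxθ⟩)
    have hr : (-(x * (1 - x))) * (-(d2 * b1 * sh * (x - θ)))
        = x * (1 - x) * (d2 * b1 * sh * (x - θ)) := by ring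
    have hpr : 0 ≤ (-(x * (1 - x))) * (-(d2 * b1 * sh * (x - θ))) :=
      mul_nonneg (by linarith) (by linarith)
    linarith

  have hfup : ∀ x : ℝ, θ ≤ x → x ≤ θ + δ → 0 ≤ f x := by
    intro x hx1 hx2
    rw [hfnum]
    have hD' := hD x (by linarith) hx2
    obtain ⟨h1, h2⟩ := hfac x hx2
    apply div_nonneg _ hD'.le
    have hx0 : 0 ≤ x := by linarith
    have hxθ : 0 ≤ x - θ := by linarith
    exact mul_nonneg (mul_nonneg hx0 h1.le) (mul_nonneg (by positivity) hxθ)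
  have hfθ0 : f θ = 0 := by rw [hfnum]; simp
  have hf00 : f 0 = 0 := by rw [hf]; simp
  -- M > 0
  have hmstar0 : 0 ≤ mstar := by
    have h0mem : -f 0 / g 0 ≤ mstar := hmstar.2 ⟨0, ⟨le_rfl, hθpos.le⟩, rfl⟩
    rw [hf00] at h0mem; simpa using h0mem
  have hM0 : 0 < M := lt_of_le_of_lt hmstar0 hM
  -- φ = f + M g positive on [0, θ]
  have hφpos : ∀ x ∈ Icc (0:ℝ) θ, 0 < f x + M * g x := by
    intro x hx
    have hub : -f x / g x ≤ mstar := hmstar.2 ⟨x, hx, rfl⟩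
    have hgx : 0 < g x := hgpos x (by linarith [hx.1, hδpos]) (by linarith [hx.2, hδpos])
    have : -f x / g x < M := lt_of_le_of_lt hub hM
    rw [div_lt_iff₀ hgx] at this
    linarith
  -- continuity of φ on [0, θ]
  have hφcont : ContinuousOn (fun x => f x + M * g x) (Icc (0:ℝ) θ) := by
    have hnum1 : Continuous (fun x : ℝ => x * (1 - x) * (d1 * b2 - d2 * b1 * (1 - sh * x))) :=
      by continuity
    have hnum2 : Continuous (fun x : ℝ => (1 / K) * (b1 * (1 - x) * (1 - sh * x))) :=
      by continuity
    have hden : Continuous (fun x : ℝ => b1 * (1 - x) * (1 - sh * x) + b2 * x) := by continuity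
    have hdenne : ∀ x ∈ Icc (0:ℝ) θ, b1 * (1 - x) * (1 - sh * x) + b2 * x ≠ 0 := fun x hx =>
      (hD x (by linarith [hx.1, hδpos]) (by linarith [hx.2, hδpos])).ne'
    have hfc : ContinuousOn f (Icc (0:ℝ) θ) := by
      refine ContinuousOn.congr ((hnum1.continuousOn).div hden.continuousOn hdenne) ?_
      intro x _; rw [hf]; rfl
    have hgc : ContinuousOn g (Icc (0:ℝ) θ) := by
      refine ContinuousOn.congr ((hnum2.continuousOn).div hden.continuousOn hdenne) ?_
      intro x _; rw [hg]; rfl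
    exact hfc.add (continuousOn_const.mul hgc)
  -- the clamped extension of φ
  set proj : ℝ → ℝ := fun x => max 0 (min x θ) with hprojdef
  have hprojcont : Continuous proj :=
    Continuous.max continuous_const (continuous_id.min continuous_const)
  have hprojmem : ∀ x, proj x ∈ Icc (0:ℝ) θ := fun x =>
    ⟨le_max_left _ _, max_le hθpos.le (min_le_right _ _)⟩
  have hprojid : ∀ x ∈ Icc (0:ℝ) θ, proj x = x := by
    intro x hx; rw [hprojdef]; simp [min_eq_left hx.2, max_eq_right hx.1]
  set φe : ℝ → ℝ := fun x => f (proj x) + M * g (proj x) with hφedef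
  have hφecont : Continuous φe := hφcont.comp_continuous hprojcont hprojmem
  have hφepos : ∀ x, 0 < φe x := fun x => hφpos (proj x) (hprojmem x)
  have hφeeq : ∀ x ∈ Icc (0:ℝ) θ, φe x = f x + M * g x := by
    intro x hx; rw [hφedef]; dsimp only; rw [hprojid x hx]
  have hmem0 : (0:ℝ) ∈ Icc (0:ℝ) θ := ⟨le_rfl, hθpos.le⟩
  obtain ⟨xlo, hxlo, hlo'⟩ := isCompact_Icc.exists_isMinOn ⟨0, hmem0⟩ hφcont
  obtain ⟨xhi, hxhi, hhi'⟩ := isCompact_Icc.exists_isMaxOn ⟨0, hmem0⟩ hφcont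
  have hlo := isMinOn_iff.mp hlo'
  have hhi := isMaxOn_iff.mp hhi'
  set cm : ℝ := f xlo + M * g xlo with hcmdef
  set cM : ℝ := f xhi + M * g xhi with hcMdef
  have hcm : 0 < cm := hφpos xlo hxlo
  have hφelb : ∀ x, cm ≤ φe x := by
    intro x
    exact hlo (proj x) (hprojmem x)
  have hφeub : ∀ x, φe x ≤ cM := by
    intro x
    exact hhi (proj x) (hprojmem x)
  set ψe : ℝ → ℝ := fun x => (φe x)⁻¹ with hψedef
  have hψec : Continuous ψe := hφecont.inv₀ (fun x => (hφepos x).ne')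
  have hTstar' : Tstar = ∫ x in (0:ℝ)..θ, (φe x)⁻¹ := by
    rw [hTstar]
    refine intervalIntegral.integral_congr (fun x hx => ?_)
    rw [uIcc_of_le hθpos.le] at hx
    rw [hφeeq x hx]
  have hTstar0 : 0 ≤ Tstar := by
    rw [hTstar']
    exact intervalIntegral.integral_nonneg hθpos.le (fun y _ => (inv_pos.2 (hφepos y)).le)
  have hT0 : 0 ≤ T := hTstar0.trans hT
  -- Part 1 : the lower bound
  have part1 : ∀ u p : ℝ → ℝ, IsTrajectory f g T M u p → p T = θ →
      M * Tstar ≤ ∫ t in (0:ℝ)..T, u t := by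
    rintro u p ⟨hum, hubd, hpc, hp0, hpI⟩ hpT
    set h : ℝ → ℝ := fun s => f (p s) + u s * g (p s) with hhdef
    have hTmem : T ∈ Icc (0:ℝ) T := ⟨hT0, le_rfl⟩
    have hint : IntervalIntegrable h volume 0 T := by
      by_contra hni
      have h1 := hpI T hTmem
      rw [intervalIntegral.integral_undef hni, hpT] at h1
      linarith
    have hinv : ∀ t ∈ Icc (0:ℝ) T, p t ∈ Icc 0 θ := by
      refine invariance T θ δ hδpos hθpos hT0 p h hpc hp0 hpT hint hpI ?_ ?_
      · intro s hs h1 h2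
        have hglow := hgpos (p s) h1.le (by linarith)
        have hflow' := hflow (p s) h1.le h2.le
        have hug : 0 ≤ u s * g (p s) := mul_nonneg (hubd s).1 hglow.le
        rw [hhdef]; dsimp only; linarith
      · intro s hs h1 h2
        have hgup := hgpos (p s) (by linarith) h2.le
        have hfup' := hfup (p s) h1.le h2.le
        have hug : 0 ≤ u s * g (p s) := mul_nonneg (hubd s).1 hgup.le
        rw [hhdef]; dsimp only; linarith
    have hpoint : ∀ s ∈ Icc (0:ℝ) T, M * (h s * ψe (p s)) ≤ u s := by
      intro s hs
      obtain ⟨hps0, hpsθ⟩ := hinv s hs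
      have hφx : 0 < φe (p s) := hφepos _
      have hfx : f (p s) ≤ 0 := hfnonpos _ hps0 hpsθ
      obtain ⟨hu0, huM⟩ := hubd s
      have hkey : M * h s ≤ u s * φe (p s) := by
        rw [hφeeq _ ⟨hps0, hpsθ⟩, hhdef]
        dsimp only
        nlinarith [mul_nonneg (sub_nonneg.2 huM) (neg_nonneg.2 hfx)]
      rw [hψedef]; dsimp only
      rw [show M * (h s * (φe (p s))⁻¹) = (M * h s) / (φe (p s)) by
        rw [div_eq_mul_inv]; ring]
      rw [div_le_iff₀ hφx]
      exact hkey
    have hLHSint : IntervalIntegrable (fun s => M * (h s * ψe (p s))) volume 0 T :=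
      (hint.mul_continuousOn
        (by rw [uIcc_of_le hT0]; exact hψec.comp_continuousOn hpc)).const_mul M
    have huint : IntervalIntegrable u volume 0 T := by
      rw [intervalIntegrable_iff_integrableOn_Ioc_of_le hT0]
      refine Integrable.mono' (integrableOn_const (C := M) measure_Ioc_lt_top.ne)
        hum.aestronglyMeasurable.restrict ?_
      refine Filter.Eventually.of_forall (fun s => ?_)
      rw [Real.norm_eq_abs, abs_le]
      exact ⟨by linarith [(hubd s).1, hM0], (hubd s).2⟩
    have hmono := intervalIntegral.integral_mono_on hT0 hLHSint huint hpoint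
    have hcongr : (∫ s in (0:ℝ)..T, h s * ψe (p s))
        = ∫ s in (0:ℝ)..T, h s * ψe (∫ x in (0:ℝ)..s, h x) := by
      refine intervalIntegral.integral_congr (fun s hs => ?_)
      rw [uIcc_of_le hT0] at hs
      rw [← hpI s hs]
    have hkeyid := key_cov T hT0 h ψe hint hψec
    have hpTi : (∫ x in (0:ℝ)..T, h x) = θ := by rw [← hpI T hTmem, hpT]
    have hLHS : (∫ s in (0:ℝ)..T, M * (h s * ψe (p s))) = M * Tstar := by
      rw [intervalIntegral.integral_const_mul, hcongr, hkeyid, hpTi, hTstar']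
    linarith [hmono, hLHS.symm.le, hLHS.le]
  -- Part 2 : construction of the optimal control
  have hfgid : ∀ x ∈ Icc (0:ℝ) θ, f x + M * g x = φe x := fun x hx => (hφeeq x hx).symm
  obtain ⟨u₀, p₀, htraj₀, hp₀T, hcost₀⟩ :=
    construction θ Tstar T M cm cM f g φe hφecont hcm hφelb hφeub hθpos.le hM0 hT
      hTstar' hfgid hfθ0
  refine ⟨part1, ⟨⟨u₀, p₀, htraj₀, hp₀T, hcost₀.symm⟩, ?_⟩⟩
  rintro c ⟨u, p, htr, hpT, rfl⟩
  exact part1 u p htr hpT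
end
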